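/- arXiv:1401.0611 — 3 statements merged into one kernel-verified Lean document; each statement's English description precedes it below -/
import Mathlib

section
/- Let X be a Coxeter graph satisfying condition (★) and let w ∈ W_c(X). Then Σ_{x ∈ W_c(X), x ≤ w} (−1)^{ℓ(x)} q^{-ℓ(x)/2} L_{x,w}(q^{-1/2}) equals 1 if w = e (the identity) and 0 otherwise. -/
/-!
Common setup: Coxeter systems, Bruhat order, fully commutative elements,
the Hecke algebra `H(X)`, the generalized Temperley--Lieb algebra `TL(X)`,
and the polynomial families `R`, `P` (Kazhdan--Lusztig), `D`, `a`, `L`.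
-/

open LaurentPolynomial Polynomial

noncomputable section

namespace TLPaper

open scoped Classical

/-- The ring `A = ℤ[q^{1/2}, q^{-1/2}]`, modelled as Laurent polynomials over `ℤ`
in the variable `T = q^{1/2}`. -/
abbrev A : Type := LaurentPolynomial ℤ

/-- The element `q = (q^{1/2})^2` of `A`. -/
def q : A := LaurentPolynomial.T 2

variable {B : Type*} {W : Type*} [Group W] {M : CoxeterMatrix B} (cs : CoxeterSystem M W)

/-- The Bruhat order on a Coxeter group: the reflexive-transitive closure of the relation
`x → xt` where `t` is a reflection and the length increases. -/
def bruhatLE : W → W → Prop :=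
  Relation.ReflTransGen
    (fun x y => (∃ t : W, cs.IsReflection t ∧ y = x * t) ∧ cs.length x < cs.length y)

/-- Strict Bruhat order. -/
def bruhatLT (x w : W) : Prop := bruhatLE cs x w ∧ x ≠ w

/-- A single commutation move on words: interchanging two adjacent commuting letters
(i.e. letters `i`, `j` with `M i j = 2`). -/
def CommMove (M : CoxeterMatrix B) (l₁ l₂ : List B) : Prop :=
  ∃ (a b : List B) (i j : B), M i j = 2 ∧ l₁ = a ++ i :: j :: b ∧ l₂ = a ++ j :: i :: b

/-- An element `w` is *fully commutative* if any reduced word for `w` can be obtained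
from any other by a sequence of commutation moves. -/
def FullyCommutative (w : W) : Prop :=
  ∀ l₁ l₂ : List B, (cs.IsReduced l₁ ∧ cs.wordProd l₁ = w) →
    (cs.IsReduced l₂ ∧ cs.wordProd l₂ = w) →
    Relation.ReflTransGen (CommMove M) l₁ l₂

/-- All the data of the paper: the Hecke algebra `H` of the Coxeter system `cs` with its
standard basis `Tw`, the `R`-polynomials, the Kazhdan--Lusztig polynomials `P`,
the generalized Temperley--Lieb algebra `TL = H/J` (with `proj` the canonical projection),
the `D`-polynomials, the `a`-polynomials, and the IC basis `c` with its `L`-polynomials.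
The polynomial `L x w` is a polynomial in the variable `v = q^{-1/2}`;
all other polynomial families are polynomials in `q`. -/
structure TLContext {B : Type*} {W : Type*} [Group W] {M : CoxeterMatrix B}
    (cs : CoxeterSystem M W)
    (H : Type*) [Ring H] [Algebra A H] (TL : Type*) [Ring TL] [Algebra A TL] where
  /-- The standard basis `{T_w}` of the Hecke algebra. -/
  Tw : W → H
  Tw_indep : LinearIndependent A Tw
  Tw_span : Submodule.span A (Set.range Tw) = ⊤
  Tw_one : Tw 1 = 1
  /-- Multiplication rule, case `ℓ(ws) > ℓ(w)`. -/
  Tw_mul_simple_of_lt : ∀ (w : W) (i : B),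
    cs.length w < cs.length (w * cs.simple i) →
    Tw w * Tw (cs.simple i) = Tw (w * cs.simple i)
  /-- Multiplication rule, case `ℓ(ws) < ℓ(w)`. -/
  Tw_mul_simple_of_gt : ∀ (w : W) (i : B),
    cs.length (w * cs.simple i) < cs.length w →
    Tw w * Tw (cs.simple i) = q • Tw (w * cs.simple i) + (q - 1) • Tw w
  /-- `Tinv w` is the inverse of `T_w` in `H`. -/
  Tinv : W → H
  Tw_mul_Tinv : ∀ w : W, Tw w * Tinv w = 1
  Tinv_mul_Tw : ∀ w : W, Tinv w * Tw w = 1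
  /-- Bruhat lower sets are finite. -/
  finite_bruhatLE : ∀ w : W, {x | bruhatLE cs x w}.Finite
  /-- The `R`-polynomials. -/
  R : W → W → Polynomial ℤ
  R_self : ∀ w : W, R w w = 1
  R_eq_zero : ∀ x w : W, ¬ bruhatLE cs x w → R x w = 0
  /-- `T_{w⁻¹}⁻¹ = ε_w q^{-ℓ(w)} Σ_{x ≤ w} ε_x R_{x,w}(q) T_x`. -/
  Tinv_eq : ∀ w : W, Tinv w⁻¹ =
    ((-1 : A) ^ cs.length w * LaurentPolynomial.T (-2 * (cs.length w : ℤ))) •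
      ∑ᶠ x ∈ {x | bruhatLE cs x w},
        ((-1 : A) ^ cs.length x * Polynomial.aeval q (R x w)) • Tw x
  /-- The Kazhdan--Lusztig polynomials. -/
  P : W → W → Polynomial ℤ
  P_self : ∀ w : W, P w w = 1
  P_eq_zero : ∀ x w : W, ¬ bruhatLE cs x w → P x w = 0
  /-- `deg P_{x,w} ≤ (ℓ(w) - ℓ(x) - 1)/2` for `x < w`. -/
  P_degree : ∀ x w : W, bruhatLT cs x w →
    2 * (P x w).natDegree + 1 ≤ cs.length w - cs.length x
  /-- The involution `ι` of the Hecke algebra. -/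
  iotaH : H →+* H
  iotaH_involutive : ∀ h : H, iotaH (iotaH h) = h
  iotaH_Tw : ∀ w : W, iotaH (Tw w) = Tinv w⁻¹
  iotaH_smul : ∀ (a : A) (h : H),
    iotaH (a • h) = (LaurentPolynomial.invert (R := ℤ) a) • iotaH h
  /-- `ι` fixes the Kazhdan--Lusztig basis element
  `C'_w = q^{-ℓ(w)/2} Σ_{x ≤ w} P_{x,w}(q) T_x`. -/
  iotaH_KL : ∀ w : W,
    iotaH ((LaurentPolynomial.T (-(cs.length w : ℤ)) : A) •
      ∑ᶠ x ∈ {x | bruhatLE cs x w}, (Polynomial.aeval q (P x w)) • Tw x) =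
    (LaurentPolynomial.T (-(cs.length w : ℤ)) : A) •
      ∑ᶠ x ∈ {x | bruhatLE cs x w}, (Polynomial.aeval q (P x w)) • Tw x
  /-- The canonical projection `σ : H → TL = H/J`. -/
  proj : H →ₐ[A] TL
  proj_surjective : Function.Surjective proj
  /-- The kernel of `σ` is the two-sided ideal `J` generated by the elements
  `Σ_{w ∈ ⟨s_i, s_j⟩} T_w`, over all pairs of non-commuting generators `s_i, s_j`
  such that `s_i s_j` has finite order. -/
  proj_ker : ∀ h : H, proj h = 0 ↔ h ∈ Submodule.span A
    {x : H | ∃ (i j : B) (a b : H), M i j ≠ 0 ∧ M i j ≠ 1 ∧ M i j ≠ 2 ∧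
      x = a * (∑ᶠ u ∈ (Subgroup.closure {cs.simple i, cs.simple j} : Set W), Tw u) * b}
  /-- The images `t_w = σ(T_w)`, `w` fully commutative, are linearly independent. -/
  t_indep : LinearIndependent A
    (fun x : {w : W // FullyCommutative cs w} => proj (Tw x.1))
  /-- The `D`-polynomials. -/
  D : W → W → Polynomial ℤ
  /-- `t_w = Σ_{x ∈ W_c, x ≤ w} D_{x,w}(q) t_x`. -/
  D_eq : ∀ w : W, proj (Tw w) =
    ∑ᶠ x ∈ {x | FullyCommutative cs x ∧ bruhatLE cs x w},
      (Polynomial.aeval q (D x w)) • proj (Tw x)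
  D_self : ∀ w : W, FullyCommutative cs w → D w w = 1
  D_eq_zero : ∀ x w : W, ¬ (FullyCommutative cs x ∧ bruhatLE cs x w) → D x w = 0
  /-- The `a`-polynomials. -/
  apol : W → W → Polynomial ℤ
  /-- `(t_{w⁻¹})⁻¹ = q^{-ℓ(w)} Σ_{y ∈ W_c, y ≤ w} a_{y,w}(q) t_y` for `w ∈ W_c`. -/
  apol_eq : ∀ w : W, FullyCommutative cs w →
    proj (Tinv w⁻¹) = (LaurentPolynomial.T (-2 * (cs.length w : ℤ)) : A) •
      ∑ᶠ y ∈ {y | FullyCommutative cs y ∧ bruhatLE cs y w},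
        (Polynomial.aeval q (apol y w)) • proj (Tw y)
  apol_self : ∀ w : W, FullyCommutative cs w → apol w w = 1
  apol_eq_zero : ∀ y w : W,
    ¬ (FullyCommutative cs y ∧ FullyCommutative cs w ∧ bruhatLE cs y w) → apol y w = 0
  /-- The involution `ι` of the Temperley--Lieb algebra. -/
  iotaTL : TL →+* TL
  iotaTL_involutive : ∀ x : TL, iotaTL (iotaTL x) = x
  iotaTL_t : ∀ w : W, iotaTL (proj (Tw w)) = proj (Tinv w⁻¹)
  iotaTL_smul : ∀ (a : A) (x : TL),
    iotaTL (a • x) = (LaurentPolynomial.invert (R := ℤ) a) • iotaTL x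
  /-- The `L`-polynomials: `L x w` is a polynomial in the variable `v = q^{-1/2}`, and
  `L_{x,w}(q^{-1/2})` is obtained by evaluating it at `T (-1) = q^{-1/2}`. -/
  L : W → W → Polynomial ℤ
  /-- The IC basis `{c_w}` of `TL`. -/
  c : W → TL
  /-- `c_w = Σ_{x ∈ W_c, x ≤ w} q^{-ℓ(x)/2} L_{x,w}(q^{-1/2}) t_x`. -/
  c_eq : ∀ w : W, FullyCommutative cs w →
    c w = ∑ᶠ x ∈ {x | FullyCommutative cs x ∧ bruhatLE cs x w},
      ((LaurentPolynomial.T (-(cs.length x : ℤ)) : A) *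
        Polynomial.aeval (R := ℤ) ((LaurentPolynomial.T (-1) : A)) (L x w)) • proj (Tw x)
  /-- Convention: `c_x = 0` for `x ∉ W_c`. -/
  c_eq_zero : ∀ w : W, ¬ FullyCommutative cs w → c w = 0
  /-- The IC basis is `ι`-invariant. -/
  c_invariant : ∀ w : W, FullyCommutative cs w → iotaTL (c w) = c w
  L_self : ∀ w : W, L w w = 1
  L_eq_zero : ∀ x w : W,
    ¬ (FullyCommutative cs x ∧ FullyCommutative cs w ∧ bruhatLE cs x w) → L x w = 0
  /-- `L_{x,w}(q^{-1/2}) ∈ q^{-1/2} ℤ[q^{-1/2}]` for `x < w`. -/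
  L_coeff_zero : ∀ x w : W, bruhatLT cs x w → (L x w).coeff 0 = 0

namespace TLContext

variable {B : Type*} {W : Type*} [Group W] {M : CoxeterMatrix B} {cs : CoxeterSystem M W}
  {H : Type*} [Ring H] [Algebra A H] {TL : Type*} [Ring TL] [Algebra A TL]
  (Ctx : TLContext cs H TL)

/-- `μ(x,w)`: the coefficient of `q^{(ℓ(w)-ℓ(x)-1)/2}` in the Kazhdan--Lusztig
polynomial `P_{x,w}(q)` (which is zero unless `ℓ(w) - ℓ(x)` is odd). -/
def mu (x w : W) : ℤ :=
  if Odd (cs.length w - cs.length x) then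
    (Ctx.P x w).coeff ((cs.length w - cs.length x - 1) / 2)
  else 0

/-- The Kazhdan--Lusztig basis element `C'_w = q^{-ℓ(w)/2} Σ_{x ≤ w} P_{x,w}(q) T_x`. -/
def KL (w : W) : H :=
  (LaurentPolynomial.T (-(cs.length w : ℤ)) : A) •
    ∑ᶠ x ∈ {x | bruhatLE cs x w}, (Polynomial.aeval q (Ctx.P x w)) • Ctx.Tw x

/-- Condition (★): the projection sends the Kazhdan--Lusztig basis element `C'_w`
to `c_w` if `w ∈ W_c` and to `0` otherwise. -/
def Star : Prop :=
  (∀ w : W, FullyCommutative cs w → Ctx.proj (Ctx.KL w) = Ctx.c w) ∧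
  (∀ w : W, ¬ FullyCommutative cs w → Ctx.proj (Ctx.KL w) = 0)

/-- `L_{x,w}(q^{-1/2})` as an element of `A`. -/
def Lq (x w : W) : A := Polynomial.aeval (R := ℤ) ((LaurentPolynomial.T (-1) : A)) (Ctx.L x w)

/-- `L_{x,w}(q^{1/2})` as an element of `A`. -/
def Lq' (x w : W) : A := Polynomial.aeval (R := ℤ) ((LaurentPolynomial.T 1 : A)) (Ctx.L x w)

end TLContext
/-! ### Auxiliary lemmas for the proof of `statement3` -/

section Aux

lemma A_eq_zero_of_eq_neg {x : A} (h : x = -x) : x = 0 := by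
  have hk : ∀ k : ℤ, x.coeff k = 0 := by
    intro k
    have h1 : x.coeff k = (-x).coeff k := by rw [← h]
    have h2 : (-x).coeff k = -(x.coeff k) := rfl
    omega
  exact LaurentPolynomial.ext hk

lemma coeff_T_mul_aeval (n : ℕ) (p : Polynomial ℤ) (hp : p.coeff 0 = 0 ∨ 1 ≤ n)
    (k : ℤ) (hk : 0 ≤ k) :
    ((LaurentPolynomial.T (-(n : ℤ)) : A) * Polynomial.aeval (LaurentPolynomial.T (-1) : A) p).coeff k
      = 0 := by
  rw [Polynomial.aeval_eq_sum_range, Finset.mul_sum]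
  have e : ∀ i : ℕ, (LaurentPolynomial.T (-(n : ℤ)) : A) *
      (p.coeff i • (LaurentPolynomial.T (-1) : A) ^ i)
      = p.coeff i • (LaurentPolynomial.T (-(n : ℤ) + -(i : ℤ)) : A) := by
    intro i
    rw [LaurentPolynomial.T_pow, mul_smul_comm, ← LaurentPolynomial.T_add]
    norm_num
  simp_rw [e]
  rw [AddMonoidAlgebra.coeff_sum, Finsupp.finset_sum_apply]
  refine Finset.sum_eq_zero ?_
  intro i _
  rw [AddMonoidAlgebra.coeff_smul_apply, LaurentPolynomial.T_apply]
  by_cases h : (-(n : ℤ) + -(i : ℤ)) = k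
  · have hn : (n : ℤ) = 0 ∧ (i : ℤ) = 0 := by omega
    rcases hp with hp | hp
    · have hi : i = 0 := by exact_mod_cast hn.2
      rw [if_pos h, hi, hp, zero_smul]
    · exfalso; omega
  · rw [if_neg h, smul_zero]

lemma A_sum_zero_of_invol {α : Type*} (F : Finset α) (σ : α → α)
    (hmem : ∀ a ∈ F, σ a ∈ F) (hinv : ∀ a ∈ F, σ (σ a) = a)
    (f : α → A) (hf : ∀ a ∈ F, f (σ a) = - f a) :
    ∑ a ∈ F, f a = 0 := by
  have h : ∑ a ∈ F, f a = ∑ a ∈ F, f (σ a) :=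
    (Finset.sum_nbij' σ σ hmem hmem hinv hinv (fun a _ => rfl)).symm
  have h2 : ∑ a ∈ F, f (σ a) = - ∑ a ∈ F, f a := by
    rw [← Finset.sum_neg_distrib]
    exact Finset.sum_congr rfl hf
  exact A_eq_zero_of_eq_neg (h.trans h2)

variable {B : Type*} {W : Type*} [Group W] {M : CoxeterMatrix B} {cs : CoxeterSystem M W}

lemma neg_one_pow_mul_simple (u : W) (i : B) :
    ((-1 : A)) ^ cs.length (u * cs.simple i) = -(-1 : A) ^ cs.length u := by
  rcases cs.length_mul_simple u i with h | h
  · rw [h, pow_succ]; ring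
  · rw [← h, pow_succ]; ring

lemma dihedral_finite (cs : CoxeterSystem M W) (i j : B) (hij : M i j ≠ 0) :
    ((Subgroup.closure {cs.simple i, cs.simple j} : Subgroup W) : Set W).Finite := by
  set s := cs.simple i with hs
  set t := cs.simple j with ht
  set p := s * t with hp
  have hss : s * s = 1 := cs.simple_mul_simple_self i
  have hss' : ∀ x : W, s * (s * x) = x := fun x => by rw [← mul_assoc, hss, one_mul]
  have hsinv : s⁻¹ = s := cs.inv_simple i
  have htinv : t⁻¹ = t := cs.inv_simple j
  have hpfin : IsOfFinOrder p :=
    isOfFinOrder_iff_pow_eq_one.2 ⟨M i j, Nat.pos_of_ne_zero hij, cs.simple_mul_simple_pow i j⟩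
  have hPfin : ((Subgroup.zpowers p : Subgroup W) : Set W).Finite := finite_zpowers.2 hpfin
  have h1 : s * p * s⁻¹ = p⁻¹ := by
    rw [hsinv, hp, mul_inv_rev, hsinv, htinv]
    simp [mul_assoc, hss, hss']
  have hconj : ∀ z ∈ Subgroup.zpowers p, s * z * s ∈ Subgroup.zpowers p := by
    rintro z ⟨k, rfl⟩
    refine ⟨-k, ?_⟩
    calc p ^ (-k : ℤ) = ((p : W)⁻¹) ^ (k : ℤ) := by group
    _ = (s * p * s⁻¹) ^ (k : ℤ) := by rw [h1]
    _ = s * p ^ (k : ℤ) * s⁻¹ := conj_zpow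
    _ = s * p ^ (k : ℤ) * s := by rw [hsinv]
  set P := Subgroup.zpowers p with hP
  let K : Subgroup W :=
    { carrier := {x | x ∈ P ∨ x * s ∈ P}
      one_mem' := Or.inl (one_mem P)
      mul_mem' := by
        rintro a b (ha | ha) (hb | hb)
        · exact Or.inl (mul_mem ha hb)
        · refine Or.inr ?_
          have e : a * b * s = a * (b * s) := by rw [mul_assoc]
          rw [e]; exact mul_mem ha hb
        · refine Or.inr ?_
          have e : a * b * s = (a * s) * (s * b * s) := by simp [mul_assoc, hss, hss']
          rw [e]; exact mul_mem ha (hconj _ hb)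
        · refine Or.inl ?_
          have e : a * b = (a * s) * (s * (b * s) * s) := by simp [mul_assoc, hss, hss']
          rw [e]; exact mul_mem ha (hconj _ hb)
      inv_mem' := by
        rintro a (ha | ha)
        · exact Or.inl (inv_mem ha)
        · refine Or.inr ?_
          have e : a⁻¹ * s = s * (a * s)⁻¹ * s := by
            rw [mul_inv_rev, hsinv]; simp [mul_assoc, hss, hss']
          rw [e]; exact hconj _ (inv_mem ha) }
  have hKfin : (K : Set W).Finite := by
    have hsub : (K : Set W) ⊆ (P : Set W) ∪ (fun y => y * s) '' (P : Set W) := by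
      rintro x (hx | hx)
      · exact Or.inl hx
      · refine Or.inr ⟨x * s, hx, ?_⟩
        simp [mul_assoc, hss]
    exact ((hPfin.union (hPfin.image _)).subset hsub)
  refine Set.Finite.subset hKfin ?_
  have hle : Subgroup.closure {s, t} ≤ K := by
    rw [Subgroup.closure_le]
    rintro x hx
    rcases hx with rfl | rfl
    · refine Or.inr ?_
      rw [hss]; exact one_mem P
    · refine Or.inr ?_
      refine ⟨-1, ?_⟩
      show p ^ (-1 : ℤ) = t * s
      rw [zpow_neg_one, hp, mul_inv_rev, hsinv, htinv]
  exact hle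

lemma bruhatLE_length_le {x w : W} (h : bruhatLE cs x w) : cs.length x ≤ cs.length w := by
  induction h with
  | refl => exact le_refl _
  | tail _ hr ih => exact ih.trans (le_of_lt hr.2)

lemma bruhatLE_one {x : W} (h : bruhatLE cs x 1) : x = 1 := by
  have := bruhatLE_length_le h
  rw [cs.length_one] at this
  exact cs.length_eq_zero_iff.mp (Nat.le_zero.mp this)

lemma fullyCommutative_one : FullyCommutative cs (1 : W) := by
  intro l₁ l₂ h₁ h₂
  have e₁ : l₁ = [] := by
    have := h₁.1
    rw [CoxeterSystem.IsReduced, h₁.2, cs.length_one] at this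
    exact List.length_eq_zero_iff.mp this.symm
  have e₂ : l₂ = [] := by
    have := h₂.1
    rw [CoxeterSystem.IsReduced, h₂.2, cs.length_one] at this
    exact List.length_eq_zero_iff.mp this.symm
  rw [e₁, e₂]

end Aux
section Eps

variable {B : Type*} {W : Type*} [Group W] {M : CoxeterMatrix B} {cs : CoxeterSystem M W}
  {H : Type*} [Ring H] [Algebra A H] {TL : Type*} [Ring TL] [Algebra A TL]

namespace TLContext

variable (Ctx : TLContext cs H TL)

/-- The basis of `H` given by the `T_w`. -/
def bas : Module.Basis W A H := Module.Basis.mk Ctx.Tw_indep Ctx.Tw_span.ge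

/-- The sign character of the Hecke algebra, as a linear functional. -/
def eps : H →ₗ[A] A := (Ctx.bas.constr ℕ) fun u => (-1 : A) ^ cs.length u

lemma eps_Tw (u : W) : Ctx.eps (Ctx.Tw u) = (-1 : A) ^ cs.length u := by
  have hb : Ctx.Tw u = Ctx.bas u := (Module.Basis.mk_apply _ _ _).symm
  rw [hb, eps, Module.Basis.constr_basis]

lemma eps_mul_simple (i : B) (h : H) :
    Ctx.eps (h * Ctx.Tw (cs.simple i)) = - Ctx.eps h := by
  have key : (Ctx.eps.comp (LinearMap.mulRight A (Ctx.Tw (cs.simple i)))) = - Ctx.eps := by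
    refine Module.Basis.ext Ctx.bas fun u => ?_
    have hb : Ctx.bas u = Ctx.Tw u := Module.Basis.mk_apply _ _ _
    simp only [LinearMap.comp_apply, LinearMap.mulRight_apply, LinearMap.neg_apply, hb]
    rcases cs.length_mul_simple u i with hlen | hlen
    · rw [Ctx.Tw_mul_simple_of_lt u i (by omega), Ctx.eps_Tw, Ctx.eps_Tw,
        neg_one_pow_mul_simple]
    · rw [Ctx.Tw_mul_simple_of_gt u i (by omega), map_add, map_smul, map_smul,
        Ctx.eps_Tw, Ctx.eps_Tw, neg_one_pow_mul_simple]
      simp only [smul_eq_mul]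
      ring
  have := LinearMap.congr_fun key h
  simpa using this

lemma eps_mul_word (l : List B) :
    cs.IsReduced l → ∀ h : H,
      Ctx.eps (h * Ctx.Tw (cs.wordProd l)) = Ctx.eps h * (-1 : A) ^ l.length := by
  induction l using List.reverseRecOn with
  | nil =>
    intro _ h
    simp [cs.wordProd_nil, Ctx.Tw_one]
  | append_singleton l i ih =>
    intro hred h
    have hlr : cs.length (cs.wordProd (l ++ [i])) = l.length + 1 := by
      have h0 := hred
      rwa [CoxeterSystem.IsReduced, List.length_append, List.length_singleton] at h0
    have h3 : cs.wordProd (l ++ [i]) = cs.wordProd l * cs.simple i := by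
      rw [cs.wordProd_append]
      simp [cs.wordProd_cons, cs.wordProd_nil]
    have hl : cs.IsReduced l := by
      have h1 : cs.length (cs.wordProd l) ≤ l.length := cs.length_wordProd_le l
      have h2 : cs.length (cs.wordProd l * cs.simple i) ≤ cs.length (cs.wordProd l) + 1 := by
        have h4 := cs.length_mul_le (cs.wordProd l) (cs.simple i)
        rwa [cs.length_simple] at h4
      rw [h3] at hlr
      unfold CoxeterSystem.IsReduced
      omega
    have hlt : cs.length (cs.wordProd l) < cs.length (cs.wordProd l * cs.simple i) := by
      rw [← h3, hlr, hl]
      omega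
    have hmul := Ctx.Tw_mul_simple_of_lt (cs.wordProd l) i hlt
    rw [h3, ← hmul, ← mul_assoc, Ctx.eps_mul_simple, ih hl h,
      List.length_append, List.length_singleton, pow_succ]
    ring

lemma eps_mul (g h : H) : Ctx.eps (g * h) = Ctx.eps g * Ctx.eps h := by
  have key : (Ctx.eps.comp (LinearMap.mulLeft A g)) = Ctx.eps g • Ctx.eps := by
    refine Module.Basis.ext Ctx.bas fun u => ?_
    have hb : Ctx.bas u = Ctx.Tw u := Module.Basis.mk_apply _ _ _
    simp only [LinearMap.comp_apply, LinearMap.mulLeft_apply, LinearMap.smul_apply, hb,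
      smul_eq_mul]
    obtain ⟨l, hlen, hword⟩ := cs.exists_reduced_word u
    have hred : cs.IsReduced l := hlen
    rw [Ctx.eps_Tw, hword, Ctx.eps_mul_word l hred g, (hlen : cs.length (cs.wordProd l) = l.length)]
  have := LinearMap.congr_fun key h
  simpa using this

lemma eps_one : Ctx.eps 1 = 1 := by
  rw [← Ctx.Tw_one, Ctx.eps_Tw, cs.length_one, pow_zero]

lemma eps_Tinv (u : W) : Ctx.eps (Ctx.Tinv u) = (-1 : A) ^ cs.length u := by
  have h1 : Ctx.eps (Ctx.Tw u) * Ctx.eps (Ctx.Tinv u) = 1 := by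
    rw [← Ctx.eps_mul, Ctx.Tw_mul_Tinv, Ctx.eps_one]
  rw [Ctx.eps_Tw] at h1
  have h2 : ((-1 : A) ^ cs.length u) * ((-1 : A) ^ cs.length u) = 1 := by
    rw [← pow_add]
    exact Even.neg_one_pow ⟨cs.length u, rfl⟩
  calc Ctx.eps (Ctx.Tinv u)
      = (((-1 : A) ^ cs.length u) * ((-1 : A) ^ cs.length u)) * Ctx.eps (Ctx.Tinv u) := by
        rw [h2, one_mul]
    _ = ((-1 : A) ^ cs.length u) * (((-1 : A) ^ cs.length u) * Ctx.eps (Ctx.Tinv u)) := by ring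
    _ = (-1 : A) ^ cs.length u := by rw [h1, mul_one]

lemma eps_gen (i j : B) (hij : M i j ≠ 0) :
    Ctx.eps (∑ᶠ u ∈ ((Subgroup.closure {cs.simple i, cs.simple j} : Subgroup W) : Set W),
      Ctx.Tw u) = 0 := by
  have hfin := dihedral_finite cs i j hij
  rw [← hfin.coe_toFinset, finsum_mem_coe_finset, map_sum]
  refine A_sum_zero_of_invol _ (fun u => u * cs.simple i) ?_ ?_ _ ?_
  · intro a ha
    rw [Set.Finite.mem_toFinset] at *
    exact mul_mem ha (Subgroup.subset_closure (by simp))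
  · intro a _
    show a * cs.simple i * cs.simple i = a
    rw [mul_assoc, cs.simple_mul_simple_self i, mul_one]
  · intro a _
    rw [Ctx.eps_Tw, Ctx.eps_Tw, neg_one_pow_mul_simple]

lemma eps_ker (h : H) (hh : Ctx.proj h = 0) : Ctx.eps h = 0 := by
  have hmem := (Ctx.proj_ker h).mp hh
  clear hh
  induction hmem using Submodule.span_induction with
  | mem x hx =>
    obtain ⟨i, j, a, b, h0, -, -, rfl⟩ := hx
    rw [Ctx.eps_mul, Ctx.eps_mul, Ctx.eps_gen i j h0]
    ring
  | zero => exact map_zero _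
  | add x y _ _ hx hy => rw [map_add, hx, hy, add_zero]
  | smul a x _ hx => rw [map_smul, hx, smul_zero]

end TLContext

end Eps

/-- Proposition (paper, Prop. `prop-l`): if `X` satisfies (★) and `w ∈ W_c`, then
`Σ_{x ∈ W_c, x ≤ w} (-1)^{ℓ(x)} q^{-ℓ(x)/2} L_{x,w}(q^{-1/2}) = δ_{e,w}`. -/
theorem statement3 {B : Type*} {W : Type*} [Group W] {M : CoxeterMatrix B} {cs : CoxeterSystem M W}
    {H : Type*} [Ring H] [Algebra A H] {TL : Type*} [Ring TL] [Algebra A TL]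
    (Ctx : TLContext cs H TL)
    (hstar : Ctx.Star) (w : W) (hw : FullyCommutative cs w) :
    ∑ᶠ x ∈ {x | FullyCommutative cs x ∧ bruhatLE cs x w},
      ((-1 : A) ^ cs.length x * (LaurentPolynomial.T (-(cs.length x : ℤ)) : A) *
        Ctx.Lq x w) =
      (if w = 1 then 1 else 0) := by
  simp only [TLContext.Lq]
  set S : Set W := {x | FullyCommutative cs x ∧ bruhatLE cs x w} with hSdef
  have hSfin : S.Finite := (Ctx.finite_bruhatLE w).subset (fun x hx => hx.2)
  set F := hSfin.toFinset with hFdef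
  have hcoe : (F : Set W) = S := hSfin.coe_toFinset
  have hsum : ∀ f : W → A, (∑ᶠ x ∈ S, f x) = ∑ x ∈ F, f x := by
    intro f; rw [← hcoe, finsum_mem_coe_finset]
  rw [hsum]
  by_cases hw1 : w = 1
  · subst hw1
    rw [if_pos rfl]
    have hFone : F = {1} := by
      ext x
      rw [Set.Finite.mem_toFinset, Finset.mem_singleton]
      constructor
      · rintro ⟨-, hb⟩; exact bruhatLE_one hb
      · rintro rfl; exact ⟨fullyCommutative_one, Relation.ReflTransGen.refl⟩
    rw [hFone, Finset.sum_singleton, cs.length_one, Ctx.L_self]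
    norm_num
  · rw [if_neg hw1]
    -- abbreviations
    set coeff : W → A := fun x =>
      (LaurentPolynomial.T (-(cs.length x : ℤ)) : A) *
        Polynomial.aeval (R := ℤ) (LaurentPolynomial.T (-1) : A) (Ctx.L x w) with hcoeff
    set Sval : A := ∑ x ∈ F, (-1 : A) ^ cs.length x *
      (LaurentPolynomial.T (-(cs.length x : ℤ)) : A) *
        Polynomial.aeval (R := ℤ) (LaurentPolynomial.T (-1) : A) (Ctx.L x w) with hSval
    show Sval = 0
    -- the two Hecke algebra elements
    set hw1' : H := ∑ x ∈ F, coeff x • Ctx.Tw x with hhw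
    set hw2' : H := ∑ x ∈ F,
      (LaurentPolynomial.invert (R := ℤ) (coeff x)) • Ctx.Tinv x⁻¹ with hhw2
    have hproj1 : Ctx.proj hw1' = Ctx.c w := by
      rw [Ctx.c_eq w hw, ← hSdef, ← hcoe, finsum_mem_coe_finset, hhw, map_sum]
      refine Finset.sum_congr rfl fun x _ => ?_
      rw [map_smul]
    have hproj2 : Ctx.proj hw2' = Ctx.iotaTL (Ctx.c w) := by
      rw [← hproj1, hhw, hhw2, map_sum, map_sum, map_sum]
      refine Finset.sum_congr rfl fun x _ => ?_
      rw [map_smul, map_smul, Ctx.iotaTL_smul, Ctx.iotaTL_t]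
    have hdiff : Ctx.proj (hw1' - hw2') = 0 := by
      rw [map_sub, hproj1, hproj2, Ctx.c_invariant w hw, sub_self]
    have hepseq : Ctx.eps hw1' = Ctx.eps hw2' := by
      have h0 := Ctx.eps_ker _ hdiff
      rw [map_sub, sub_eq_zero] at h0
      exact h0
    have heps1 : Ctx.eps hw1' = Sval := by
      rw [hhw, map_sum, hSval]
      refine Finset.sum_congr rfl fun x _ => ?_
      rw [map_smul, Ctx.eps_Tw, smul_eq_mul, hcoeff]
      ring
    have heps2 : Ctx.eps hw2' = LaurentPolynomial.invert (R := ℤ) Sval := by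
      rw [hhw2, map_sum, hSval, map_sum]
      refine Finset.sum_congr rfl fun x _ => ?_
      rw [map_smul, Ctx.eps_Tinv, cs.length_inv, smul_eq_mul]
      simp only [hcoeff, map_mul, map_pow, map_neg, map_one]
      ring
    have hinvt : Sval = LaurentPolynomial.invert (R := ℤ) Sval := by
      rw [← heps2, ← heps1]; exact hepseq
    -- coefficient vanishing for k ≥ 0
    have hpos : ∀ k : ℤ, 0 ≤ k → Sval.coeff k = 0 := by
      intro k hk
      rw [hSval, AddMonoidAlgebra.coeff_sum, Finsupp.finset_sum_apply]
      refine Finset.sum_eq_zero fun x hx => ?_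
      have hxS : x ∈ S := by rwa [← hcoe]
      have hp : (Ctx.L x w).coeff 0 = 0 ∨ 1 ≤ cs.length x := by
        by_cases hxw : x = w
        · subst hxw
          right
          have : cs.length x ≠ 0 := fun h0 => hw1 (cs.length_eq_zero_iff.mp h0)
          omega
        · exact Or.inl (Ctx.L_coeff_zero x w ⟨hxS.2, hxw⟩)
      have hbase := coeff_T_mul_aeval (cs.length x) (Ctx.L x w) hp k hk
      rw [mul_assoc]
      rcases neg_one_pow_eq_or A (cs.length x) with hsign | hsign
      · rw [hsign, one_mul, hbase]
      · rw [hsign, neg_one_mul, AddMonoidAlgebra.coeff_neg, Finsupp.neg_apply, hbase, neg_zero]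
    have hall : ∀ k : ℤ, Sval.coeff k = 0 := by
      intro k
      rcases le_or_gt 0 k with hk | hk
      · exact hpos k hk
      · have h1 : Sval.coeff k = Sval.coeff (-k) := by
          conv_lhs => rw [hinvt]
          exact LaurentPolynomial.invert_apply Sval k
        rw [h1]
        exact hpos (-k) (by omega)
    exact LaurentPolynomial.ext hall

end TLPaper
end
end

section
/- Let X be an arbitrary Coxeter graph, let w ∈ W_c(X), and let s ∈ S(X) be such that ws < w and ws ∈ W_c(X). Then for all x ∈ W_c(X) with x ≤ w, a_{x,w} = ã_{x,w} + Σ_{y ∈ W_c(X), ys ∉ W_c(X), ys > y} D_{x,ys} a_{y,ws}, where ã_{x,w} = a_{xs,ws} if x > xs; ã_{x,w} = q a_{xs,ws} + (1−q) a_{x,ws} if x < xs and xs ∈ W_c(X); and ã_{x,w} = (1−q) a_{x,ws} if x < xs and xs ∉ W_c(X). -/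
/-!
Common setup: Coxeter systems, Bruhat order, fully commutative elements,
the Hecke algebra `H(X)`, the generalized Temperley--Lieb algebra `TL(X)`,
and the polynomial families `R`, `P` (Kazhdan--Lusztig), `D`, `a`, `L`.
-/

open LaurentPolynomial Polynomial

noncomputable section

namespace TLPaper

variable {B : Type*} {W : Type*} [Group W] {M : CoxeterMatrix B} (cs : CoxeterSystem M W)

section Comb
open scoped Classical

/-- Projection of a word onto the letters `p`, `q`. -/
noncomputable def pr (p q : B) : List B → List B
  | [] => []
  | x :: l => if x = p ∨ x = q then x :: pr p q l else pr p q l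

lemma pr_nil (p q : B) : pr p q ([] : List B) = [] := rfl

lemma pr_cons (p q c : B) (l : List B) :
    pr p q (c :: l) = if c = p ∨ c = q then c :: pr p q l else pr p q l := rfl

lemma pr_append (p q : B) (l₁ l₂ : List B) :
    pr p q (l₁ ++ l₂) = pr p q l₁ ++ pr p q l₂ := by
  induction l₁ with
  | nil => simp [pr]
  | cons c l ih => by_cases h : c = p ∨ c = q <;> simp [pr_cons, h, ih]

lemma mem_pr {p q x : B} {l : List B} : x ∈ pr p q l ↔ x ∈ l ∧ (x = p ∨ x = q) := by
  induction l with
  | nil => simp [pr]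
  | cons c l ih =>
    by_cases h : c = p ∨ c = q
    · simp only [pr_cons, if_pos h, List.mem_cons, ih]
      constructor
      · rintro (rfl | ⟨h1, h2⟩)
        · exact ⟨Or.inl rfl, h⟩
        · exact ⟨Or.inr h1, h2⟩
      · rintro ⟨(rfl | h1), h2⟩
        · exact Or.inl rfl
        · exact Or.inr ⟨h1, h2⟩
    · simp only [pr_cons, if_neg h, List.mem_cons, ih]
      constructor
      · rintro ⟨h1, h2⟩
        exact ⟨Or.inr h1, h2⟩
      · rintro ⟨(rfl | h1), h2⟩
        · exact absurd h2 h
        · exact ⟨h1, h2⟩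

lemma pr_commMove {p q : B} (hpq : p = q ∨ M p q ≠ 2) {l₁ l₂ : List B}
    (h : CommMove M l₁ l₂) : pr p q l₁ = pr p q l₂ := by
  obtain ⟨a, b, i, j, hM, rfl, rfl⟩ := h
  rw [pr_append, pr_append]
  congr 1
  by_cases hi : i = p ∨ i = q <;> by_cases hj : j = p ∨ j = q
  · have hij : i = j := by
      rcases hpq with rfl | hM2
      · rcases hi with rfl | rfl <;> rcases hj with rfl | rfl <;> rfl
      · by_contra hne
        rcases hi with rfl | rfl <;> rcases hj with rfl | rfl <;>
          first
            | exact hne rfl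
            | exact hM2 hM
            | exact hM2 ((M.symmetric _ _).trans hM)
    subst hij
    rfl
  · simp [pr_cons, hi, hj]
  · simp [pr_cons, hi, hj]
  · simp [pr_cons, hi, hj]

lemma pr_commEquiv {p q : B} (hpq : p = q ∨ M p q ≠ 2) {l₁ l₂ : List B}
    (h : Relation.ReflTransGen (CommMove M) l₁ l₂) : pr p q l₁ = pr p q l₂ := by
  induction h with
  | refl => rfl
  | tail _ h₂ ih => exact ih.trans (pr_commMove hpq h₂)

lemma commMove_symm {l₁ l₂ : List B} (h : CommMove M l₁ l₂) : CommMove M l₂ l₁ := by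
  obtain ⟨a, b, i, j, hM, h1, h2⟩ := h
  exact ⟨a, b, j, i, (M.symmetric i j) ▸ hM, h2, h1⟩

lemma commEquiv_symm {l₁ l₂ : List B} (h : Relation.ReflTransGen (CommMove M) l₁ l₂) :
    Relation.ReflTransGen (CommMove M) l₂ l₁ :=
  by
    haveI : Std.Symm (CommMove M) := ⟨fun _ _ hm => commMove_symm hm⟩
    exact Std.Symm.symm _ _ h

lemma commEquiv_cons (c : B) {l₁ l₂ : List B}
    (h : Relation.ReflTransGen (CommMove M) l₁ l₂) :
    Relation.ReflTransGen (CommMove M) (c :: l₁) (c :: l₂) := by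
  refine Relation.ReflTransGen.lift (c :: ·) (fun a b hab => ?_) _ _ h
  obtain ⟨d, e, i, j, hM, rfl, rfl⟩ := hab
  exact ⟨c :: d, e, i, j, hM, rfl, rfl⟩

lemma first_split {c : B} {l : List B} (h : c ∈ l) :
    ∃ d e, l = d ++ c :: e ∧ c ∉ d := by
  induction l with
  | nil => simp at h
  | cons x l ih =>
    by_cases hx : x = c
    · exact ⟨[], l, by simp [hx], by simp⟩
    · have hcl : c ∈ l := by
        rcases List.mem_cons.mp h with h' | h'
        · exact absurd h'.symm hx
        · exact h'
      obtain ⟨d, e, rfl, hd⟩ := ih hcl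
      refine ⟨x :: d, e, rfl, ?_⟩
      simp only [List.mem_cons]
      rintro (rfl | hc)
      · exact hx rfl
      · exact hd hc

lemma commEquiv_front {d e : List B} {c : B} (hd : ∀ x ∈ d, M c x = 2) :
    Relation.ReflTransGen (CommMove M) (d ++ c :: e) (c :: (d ++ e)) := by
  induction d with
  | nil => exact Relation.ReflTransGen.refl
  | cons x d ih =>
    have h1 : Relation.ReflTransGen (CommMove M) (x :: (d ++ c :: e)) (x :: c :: (d ++ e)) :=
      commEquiv_cons x (ih fun z hz => hd z (List.mem_cons_of_mem x hz))
    refine h1.tail ?_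
    exact ⟨[], d ++ e, x, c, (M.symmetric c x) ▸ hd x (List.mem_cons_self (a := x) (l := d)), rfl, rfl⟩

lemma commEquiv_of_pr_eq :
    ∀ l₁ l₂ : List B, (∀ p q : B, (p = q ∨ M p q ≠ 2) → pr p q l₁ = pr p q l₂) →
    Relation.ReflTransGen (CommMove M) l₁ l₂ := by
  intro l₁
  induction l₁ with
  | nil =>
    intro l₂ h
    cases l₂ with
    | nil => exact Relation.ReflTransGen.refl
    | cons c l =>
      exfalso
      have h' := h c c (Or.inl rfl)
      rw [pr_nil, pr_cons, if_pos (Or.inl rfl)] at h'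
      exact nomatch h'
  | cons c m ih =>
    intro l₂ h
    have hc : c ∈ l₂ := by
      have h' := h c c (Or.inl rfl)
      rw [pr_cons, if_pos (Or.inl rfl)] at h'
      have hm : c ∈ pr c c l₂ := h' ▸ List.mem_cons_self (a := c)
      exact (mem_pr.mp hm).1
    obtain ⟨d, e, rfl, hcd⟩ := first_split hc
    have hcomm : ∀ x ∈ d, M c x = 2 := by
      intro x hx
      by_contra hMcx
      have hpr := h c x (Or.inr hMcx)
      rw [pr_cons, if_pos (Or.inl rfl), pr_append, pr_cons, if_pos (Or.inl rfl)] at hpr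
      have hxd : x ∈ pr c x d := mem_pr.mpr ⟨hx, Or.inr rfl⟩
      cases hprd : pr c x d with
      | nil => rw [hprd] at hxd; simp at hxd
      | cons z zs =>
        rw [hprd, List.cons_append] at hpr
        have hz : c = z := (List.cons.injEq _ _ _ _ ▸ hpr).1
        have : c ∈ pr c x d := by rw [hprd, ← hz]; exact List.mem_cons_self (a := c)
        exact hcd (mem_pr.mp this).1
    have hR2 : Relation.ReflTransGen (CommMove M) (d ++ c :: e) (c :: (d ++ e)) :=
      commEquiv_front hcomm
    have hpr2 : ∀ p q : B, (p = q ∨ M p q ≠ 2) → pr p q m = pr p q (d ++ e) := by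
      intro p q hpq
      have h1 := h p q hpq
      rw [pr_commEquiv hpq hR2] at h1
      rw [pr_cons, pr_cons] at h1
      by_cases hcpq : c = p ∨ c = q
      · rw [if_pos hcpq, if_pos hcpq] at h1
        exact (List.cons.injEq _ _ _ _ ▸ h1).2
      · rwa [if_neg hcpq, if_neg hcpq] at h1
    exact (commEquiv_cons c (ih (d ++ e) hpr2)).trans (commEquiv_symm hR2)

lemma commEquiv_cancel_right {a b : List B} {i : B}
    (h : Relation.ReflTransGen (CommMove M) (a ++ [i]) (b ++ [i])) :
    Relation.ReflTransGen (CommMove M) a b := by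
  apply commEquiv_of_pr_eq
  intro p q hpq
  have h' := pr_commEquiv hpq h
  rw [pr_append, pr_append] at h'
  exact List.append_cancel_right h'

variable {cs}

lemma fc_of_isRightDescent {y : W} {i : B}
    (hy : FullyCommutative cs y) (hd : cs.length (y * cs.simple i) < cs.length y) :
    FullyCommutative cs (y * cs.simple i) := by
  intro l₁ l₂ h1 h2
  have hlen : cs.length (y * cs.simple i) + 1 = cs.length y := cs.isRightDescent_iff.mp hd
  have key : ∀ l : List B, cs.IsReduced l ∧ cs.wordProd l = y * cs.simple i →
      cs.IsReduced (l ++ [i]) ∧ cs.wordProd (l ++ [i]) = y := by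
    rintro l ⟨hred, hprod⟩
    have hw : cs.wordProd (l ++ [i]) = y := by
      rw [cs.wordProd_append, hprod, cs.wordProd_singleton,
        cs.simple_mul_simple_cancel_right]
    refine ⟨?_, hw⟩
    unfold CoxeterSystem.IsReduced at hred ⊢
    rw [hw, List.length_append, List.length_singleton, ← hlen, ← hprod, hred]
  exact commEquiv_cancel_right (hy (l₁ ++ [i]) (l₂ ++ [i]) (key l₁ h1) (key l₂ h2))

end Comb

section Hecke

variable {B : Type*} {W : Type*} [Group W] {M : CoxeterMatrix B} {cs : CoxeterSystem M W}
  {H : Type*} [Ring H] [Algebra A H] {TL : Type*} [Ring TL] [Algebra A TL]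
  (Ctx : TLContext cs H TL)

lemma Tw_simple_mul (u : W) (i : B) (h : cs.length u < cs.length (cs.simple i * u)) :
    Ctx.Tw (cs.simple i) * Ctx.Tw u = Ctx.Tw (cs.simple i * u) := by
  suffices Hgen : ∀ (n : ℕ) (u : W), cs.length u = n →
      ∀ i : B, cs.length u < cs.length (cs.simple i * u) →
      Ctx.Tw (cs.simple i) * Ctx.Tw u = Ctx.Tw (cs.simple i * u) from
    Hgen (cs.length u) u rfl i h
  intro n
  induction n using Nat.strong_induction_on with
  | _ n ihn =>
    intro u hu i h
    rcases eq_or_ne u 1 with rfl | hne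
    · rw [Ctx.Tw_one, mul_one, mul_one]
    · obtain ⟨j, hj⟩ := cs.exists_rightDescent_of_ne_one hne
      set u' := u * cs.simple j with hu'
      have hju : u' * cs.simple j = u := cs.simple_mul_simple_cancel_right j
      have hlen' : cs.length u' + 1 = cs.length u := cs.isRightDescent_iff.mp hj
      have h1 : Ctx.Tw u' * Ctx.Tw (cs.simple j) = Ctx.Tw u := by
        have h1' := Ctx.Tw_mul_simple_of_lt u' j (by rw [hju]; omega)
        rwa [hju] at h1'
      have heq : cs.simple i * u' * cs.simple j = cs.simple i * u := by
        rw [hu', ← mul_assoc, cs.simple_mul_simple_cancel_right]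
      have hb : cs.length (cs.simple i * u) ≤ cs.length (cs.simple i * u') + 1 := by
        have hb' := cs.length_mul_le (cs.simple i * u') (cs.simple j)
        rw [heq, cs.length_simple] at hb'
        exact hb'
      have h2 : cs.length u' < cs.length (cs.simple i * u') := by
        rcases cs.length_simple_mul u' i with hh | hh <;> omega
      have h3 : Ctx.Tw (cs.simple i) * Ctx.Tw u' = Ctx.Tw (cs.simple i * u') :=
        ihn (cs.length u') (by omega) u' rfl i h2
      have h4 : cs.length (cs.simple i * u') < cs.length (cs.simple i * u' * cs.simple j) := by
        rw [heq]
        rcases cs.length_simple_mul u' i with hh | hh <;> omega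
      have h5 := Ctx.Tw_mul_simple_of_lt (cs.simple i * u') j h4
      rw [heq] at h5
      calc Ctx.Tw (cs.simple i) * Ctx.Tw u
          = Ctx.Tw (cs.simple i) * (Ctx.Tw u' * Ctx.Tw (cs.simple j)) := by rw [h1]
        _ = Ctx.Tw (cs.simple i) * Ctx.Tw u' * Ctx.Tw (cs.simple j) := by rw [mul_assoc]
        _ = Ctx.Tw (cs.simple i * u') * Ctx.Tw (cs.simple j) := by rw [h3]
        _ = Ctx.Tw (cs.simple i * u) := h5

lemma Tinv_eq_of_mul {u : W} {Z : H} (hZ : Z * Ctx.Tw u = 1) : Ctx.Tinv u = Z := by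
  have h1 : Z * (Ctx.Tw u * Ctx.Tinv u) = Z := by rw [Ctx.Tw_mul_Tinv, mul_one]
  rw [← mul_assoc, hZ, one_mul] at h1
  exact h1

lemma Tinv_simple (i : B) :
    Ctx.Tinv (cs.simple i) =
      (LaurentPolynomial.T (-2) : A) • (Ctx.Tw (cs.simple i) + ((1 : A) - q) • 1) := by
  apply Tinv_eq_of_mul
  have hss : Ctx.Tw (cs.simple i) * Ctx.Tw (cs.simple i)
      = q • (1 : H) + (q - 1) • Ctx.Tw (cs.simple i) := by
    have h0 : cs.length (cs.simple i * cs.simple i) < cs.length (cs.simple i) := by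
      rw [cs.simple_mul_simple_self, cs.length_one, cs.length_simple]
      omega
    have hss' := Ctx.Tw_mul_simple_of_gt (cs.simple i) i h0
    rwa [cs.simple_mul_simple_self, Ctx.Tw_one] at hss'
  have hc : (q - 1) + ((1 : A) - q) = 0 := by ring
  have hT : (LaurentPolynomial.T (-2) : A) * q = 1 := by
    rw [q, ← LaurentPolynomial.T_add]
    norm_num
  rw [smul_mul_assoc, add_mul, smul_mul_assoc, one_mul, hss, add_assoc, ← add_smul, hc,
    zero_smul, add_zero, smul_smul, hT, one_smul]

lemma Tinv_inv_mul (w : W) (i : B) (hws : cs.length (w * cs.simple i) < cs.length w) :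
    Ctx.Tinv w⁻¹ = Ctx.Tinv (w * cs.simple i)⁻¹ * Ctx.Tinv (cs.simple i) := by
  apply Tinv_eq_of_mul
  have he : cs.simple i * (w * cs.simple i)⁻¹ = w⁻¹ := by
    rw [mul_inv_rev, cs.inv_simple, ← mul_assoc, cs.simple_mul_simple_self, one_mul]
  have hsplit : Ctx.Tw w⁻¹ = Ctx.Tw (cs.simple i) * Ctx.Tw (w * cs.simple i)⁻¹ := by
    have hlen : cs.length ((w * cs.simple i)⁻¹)
        < cs.length (cs.simple i * (w * cs.simple i)⁻¹) := by
      rw [he, cs.length_inv, cs.length_inv]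
      exact hws
    have hres := Tw_simple_mul Ctx ((w * cs.simple i)⁻¹) i hlen
    rw [he] at hres
    exact hres.symm
  rw [hsplit, ← mul_assoc, mul_assoc (Ctx.Tinv (w * cs.simple i)⁻¹), Ctx.Tinv_mul_Tw,
    mul_one, Ctx.Tinv_mul_Tw]

lemma aevalq_injective :
    Function.Injective (fun p : Polynomial ℤ => Polynomial.aeval (R := ℤ) q p) := by
  have key : ∀ p : Polynomial ℤ,
      Polynomial.aeval (R := ℤ) q p = Polynomial.toLaurent (Polynomial.expand ℤ 2 p) := by
    intro p
    induction p using Polynomial.induction_on with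
    | C a =>
      rw [Polynomial.aeval_C, Polynomial.expand_C, Polynomial.toLaurent_C, eq_intCast,
        eq_intCast]
    | add p1 p2 h1 h2 => rw [map_add, map_add, map_add, h1, h2]
    | monomial n a _ =>
      have hq : q = LaurentPolynomial.T 1 * LaurentPolynomial.T 1 := by
        rw [q, ← LaurentPolynomial.T_add]
        norm_num
      simp only [map_mul, map_pow, Polynomial.expand_X, Polynomial.expand_C,
        Polynomial.aeval_X, Polynomial.aeval_C, Polynomial.toLaurent_C, Polynomial.toLaurent_X,
        hq, eq_intCast, map_intCast]
      ring
  intro p1 p2 hpe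
  simp only [key] at hpe
  exact Polynomial.expand_injective (by norm_num) (Polynomial.toLaurent_injective hpe)

end Hecke


/-- Proposition (paper, Prop. `proarec`): recursion for the `a`-polynomials, for an
arbitrary Coxeter graph `X`: if `w ∈ W_c`, `s ∈ S`, `ws < w`, `ws ∈ W_c`, then for all
`x ∈ W_c` with `x ≤ w`,
`a_{x,w} = ã_{x,w} + Σ_{y ∈ W_c, ys ∉ W_c, ys > y} D_{x,ys} a_{y,ws}`, where
`ã_{x,w} = a_{xs,ws}` if `x > xs`; `= q a_{xs,ws} + (1-q) a_{x,ws}` if `x < xs ∈ W_c`;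
`= (1-q) a_{x,ws}` if `x < xs ∉ W_c`. -/
theorem statement6 {B : Type*} {W : Type*} [Group W] {M : CoxeterMatrix B} {cs : CoxeterSystem M W}
    {H : Type*} [Ring H] [Algebra A H] {TL : Type*} [Ring TL] [Algebra A TL]
    (Ctx : TLContext cs H TL)
    (w : W) (hw : FullyCommutative cs w) (i : B)
    (hws : cs.length (w * cs.simple i) < cs.length w)
    (hwsc : FullyCommutative cs (w * cs.simple i))
    (x : W) (hx : FullyCommutative cs x) (hxw : bruhatLE cs x w) :
    (cs.length (x * cs.simple i) < cs.length x →
      Ctx.apol x w = Ctx.apol (x * cs.simple i) (w * cs.simple i) +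
        ∑ᶠ y ∈ {y | FullyCommutative cs y ∧ ¬ FullyCommutative cs (y * cs.simple i) ∧
            cs.length y < cs.length (y * cs.simple i)},
          Ctx.D x (y * cs.simple i) * Ctx.apol y (w * cs.simple i)) ∧
    (cs.length x < cs.length (x * cs.simple i) →
      FullyCommutative cs (x * cs.simple i) →
      Ctx.apol x w = Polynomial.X * Ctx.apol (x * cs.simple i) (w * cs.simple i) +
        (1 - Polynomial.X) * Ctx.apol x (w * cs.simple i) +
        ∑ᶠ y ∈ {y | FullyCommutative cs y ∧ ¬ FullyCommutative cs (y * cs.simple i) ∧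
            cs.length y < cs.length (y * cs.simple i)},
          Ctx.D x (y * cs.simple i) * Ctx.apol y (w * cs.simple i)) ∧
    (cs.length x < cs.length (x * cs.simple i) →
      ¬ FullyCommutative cs (x * cs.simple i) →
      Ctx.apol x w = (1 - Polynomial.X) * Ctx.apol x (w * cs.simple i) +
        ∑ᶠ y ∈ {y | FullyCommutative cs y ∧ ¬ FullyCommutative cs (y * cs.simple i) ∧
            cs.length y < cs.length (y * cs.simple i)},
          Ctx.D x (y * cs.simple i) * Ctx.apol y (w * cs.simple i)) := by
  classical
  obtain ⟨s, hs⟩ : ∃ z : W, z = cs.simple i := ⟨cs.simple i, rfl⟩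
  rw [← hs] at hws hwsc ⊢
  obtain ⟨v, hv⟩ : ∃ z : W, z = w * s := ⟨w * s, rfl⟩
  rw [← hv] at hws hwsc ⊢
  have hFCv : FullyCommutative cs v := hwsc
  have hlenwv : cs.length v + 1 = cs.length w := by
    rw [hv, hs]
    refine cs.isRightDescent_iff.mp ?_
    have hws' := hws
    rw [hv, hs] at hws'
    exact hws'
  -- bridge lemmas hiding `cs.simple i`
  have hsne : ∀ y : W, cs.length (y * s) ≠ cs.length y := by
    intro y
    rw [hs]
    exact cs.length_mul_simple_ne y i
  have hxss : ∀ z : W, z * s * s = z := by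
    intro z
    rw [hs]
    exact cs.simple_mul_simple_cancel_right i
  have hof_gt : ∀ y : W, cs.length (y * s) < cs.length y →
      Ctx.Tw y * Ctx.Tw s = q • Ctx.Tw (y * s) + (q - 1) • Ctx.Tw y := by
    intro y hd
    rw [hs] at hd ⊢
    exact Ctx.Tw_mul_simple_of_gt y i hd
  have hof_lt : ∀ y : W, cs.length y < cs.length (y * s) →
      Ctx.Tw y * Ctx.Tw s = Ctx.Tw (y * s) := by
    intro y hd
    rw [hs] at hd ⊢
    exact Ctx.Tw_mul_simple_of_lt y i hd
  have hfcdesc : ∀ y : W, FullyCommutative cs y → cs.length (y * s) < cs.length y →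
      FullyCommutative cs (y * s) := by
    intro y hy hd
    rw [hs] at hd ⊢
    exact fc_of_isRightDescent hy hd
  have hTinv : Ctx.Tinv w⁻¹ = Ctx.Tinv v⁻¹ * Ctx.Tinv s := by
    rw [hv, hs]
    refine Tinv_inv_mul Ctx w i ?_
    have hws' := hws
    rw [hv, hs] at hws'
    exact hws'
  have hTinvs : Ctx.Tinv s
      = (LaurentPolynomial.T (-2) : A) • (Ctx.Tw s + ((1 : A) - q) • 1) := by
    rw [hs]
    exact Tinv_simple Ctx i
  -- finiteness
  have hfin : ∀ z : W, {x : W | FullyCommutative cs x ∧ bruhatLE cs x z}.Finite :=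
    fun z => (Ctx.finite_bruhatLE z).subset fun x hx => hx.2
  -- zero lemmas
  have hAv0 : ∀ z : W, ¬ (FullyCommutative cs z ∧ bruhatLE cs z v) →
      Polynomial.aeval (R := ℤ) q (Ctx.apol z v) = 0 := by
    intro z hz
    rw [Ctx.apol_eq_zero z v (by tauto), map_zero]
  have hF0 : ∀ z : W, ¬ (FullyCommutative cs z ∧ bruhatLE cs z w) →
      Polynomial.aeval (R := ℤ) q (Ctx.apol z w) = 0 := by
    intro z hz
    rw [Ctx.apol_eq_zero z w (by tauto), map_zero]
  have hD0 : ∀ (z x' : W), ¬ (FullyCommutative cs x' ∧ bruhatLE cs x' z) →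
      Polynomial.aeval (R := ℤ) q (Ctx.D x' z) = 0 := by
    intro z x' hz
    rw [Ctx.D_eq_zero x' z hz, map_zero]
  -- the big finset
  set E : Finset W := ((hfin w).toFinset ∪ (hfin v).toFinset ∪
      ((hfin v).toFinset.image (· * s))) ∪
      (hfin v).toFinset.biUnion (fun y => (hfin (y * s)).toFinset) with hE
  set EFC : Finset W := E.filter (FullyCommutative cs) with hEFC
  have hmemEFC : ∀ z, z ∈ EFC → FullyCommutative cs z := by
    intro z hz
    exact (Finset.mem_filter.mp hz).2
  have hsub1 : (hfin w).toFinset ⊆ EFC := by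
    intro z hz
    refine Finset.mem_filter.mpr ⟨?_, ((hfin w).mem_toFinset.mp hz).1⟩
    exact Finset.mem_union_left _ (Finset.mem_union_left _ (Finset.mem_union_left _ hz))
  have hsub2 : (hfin v).toFinset ⊆ EFC := by
    intro z hz
    refine Finset.mem_filter.mpr ⟨?_, ((hfin v).mem_toFinset.mp hz).1⟩
    exact Finset.mem_union_left _ (Finset.mem_union_left _ (Finset.mem_union_right _ hz))
  have hsub3 : ∀ y, y ∈ (hfin v).toFinset → FullyCommutative cs (y * s) → y * s ∈ EFC := by
    intro y hy hfc
    refine Finset.mem_filter.mpr ⟨?_, hfc⟩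
    exact Finset.mem_union_left _
      (Finset.mem_union_right _ (Finset.mem_image_of_mem _ hy))
  have hsub4 : ∀ y, y ∈ (hfin v).toFinset → (hfin (y * s)).toFinset ⊆ EFC := by
    intro y hy z hz
    refine Finset.mem_filter.mpr ⟨?_, ((hfin (y * s)).mem_toFinset.mp hz).1⟩
    exact Finset.mem_union_right _ (Finset.mem_biUnion.mpr ⟨y, hy, hz⟩)
  -- Step 1 : the algebra identity in TL
  have hsm : ∀ (a b : A) (X Y : TL), (a • X) * (b • Y) = (a * b) • (X * Y) := by
    intro a b X Y
    rw [smul_mul_assoc, mul_smul_comm, smul_smul]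
  have e1 : Ctx.proj (Ctx.Tinv w⁻¹)
      = Ctx.proj (Ctx.Tinv v⁻¹) * ((LaurentPolynomial.T (-2) : A) •
          (Ctx.proj (Ctx.Tw s) + ((1 : A) - q) • 1)) := by
    rw [hTinv, map_mul, hTinvs, map_smul, map_add, map_smul, map_one]
  rw [Ctx.apol_eq w hw, Ctx.apol_eq v hFCv,
    finsum_mem_eq_finite_toFinset_sum _ (hfin w),
    finsum_mem_eq_finite_toFinset_sum _ (hfin v), hsm] at e1
  have hTT : (LaurentPolynomial.T (-2 * (cs.length v : ℤ)) : A) * LaurentPolynomial.T (-2)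
      = LaurentPolynomial.T (-2 * (cs.length w : ℤ)) := by
    rw [← LaurentPolynomial.T_add]
    congr 1
    have hcast : (cs.length w : ℤ) = (cs.length v : ℤ) + 1 := by exact_mod_cast hlenwv.symm
    rw [hcast]
    ring
  rw [hTT] at e1
  have e4 : (∑ x' ∈ (hfin w).toFinset,
        (Polynomial.aeval (R := ℤ) q (Ctx.apol x' w)) • Ctx.proj (Ctx.Tw x'))
      = (∑ y ∈ (hfin v).toFinset,
        (Polynomial.aeval (R := ℤ) q (Ctx.apol y v)) • Ctx.proj (Ctx.Tw y)) *
          (Ctx.proj (Ctx.Tw s) + ((1 : A) - q) • 1) := by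
    have h2 := congrArg
      (fun z : TL => (LaurentPolynomial.T (2 * (cs.length w : ℤ)) : A) • z) e1
    simp only [smul_smul, ← LaurentPolynomial.T_add] at h2
    have hexp : (2 * (cs.length w : ℤ) + -2 * (cs.length w : ℤ)) = 0 := by ring
    rw [hexp, LaurentPolynomial.T_zero, one_smul, one_smul] at h2
    exact h2
  rw [Finset.sum_mul] at e4
  have e5 : (∑ x' ∈ (hfin w).toFinset,
        (Polynomial.aeval (R := ℤ) q (Ctx.apol x' w)) • Ctx.proj (Ctx.Tw x'))
      = ∑ y ∈ (hfin v).toFinset,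
          ((Polynomial.aeval (R := ℤ) q (Ctx.apol y v)) •
              (Ctx.proj (Ctx.Tw y) * Ctx.proj (Ctx.Tw s)) +
            (((1 : A) - q) * Polynomial.aeval (R := ℤ) q (Ctx.apol y v)) •
              Ctx.proj (Ctx.Tw y)) := by
    rw [e4]
    refine Finset.sum_congr rfl fun y _ => ?_
    rw [mul_add, smul_mul_assoc, hsm, mul_one,
      mul_comm (Polynomial.aeval (R := ℤ) q (Ctx.apol y v)) ((1 : A) - q)]
  -- the coefficient function
  set c : W → W → A := fun y x' =>
    (if cs.length (y * s) < cs.length y ∧ x' = y * s then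
        q * Polynomial.aeval (R := ℤ) q (Ctx.apol y v) else 0)
    + (if cs.length y < cs.length (y * s) ∧ FullyCommutative cs (y * s) ∧ x' = y * s then
        Polynomial.aeval (R := ℤ) q (Ctx.apol y v) else 0)
    + (if ¬ FullyCommutative cs (y * s) ∧ cs.length y < cs.length (y * s) then
        Polynomial.aeval (R := ℤ) q (Ctx.D x' (y * s)) *
          Polynomial.aeval (R := ℤ) q (Ctx.apol y v) else 0)
    + (if cs.length y < cs.length (y * s) ∧ x' = y then
        ((1 : A) - q) * Polynomial.aeval (R := ℤ) q (Ctx.apol y v) else 0) with hcdef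
  -- per-y expansion
  have hkey : ∀ y ∈ (hfin v).toFinset,
      (Polynomial.aeval (R := ℤ) q (Ctx.apol y v)) •
          (Ctx.proj (Ctx.Tw y) * Ctx.proj (Ctx.Tw s)) +
        (((1 : A) - q) * Polynomial.aeval (R := ℤ) q (Ctx.apol y v)) • Ctx.proj (Ctx.Tw y)
      = ∑ x' ∈ EFC, c y x' • Ctx.proj (Ctx.Tw x') := by
    intro y hy
    have hyFC : FullyCommutative cs y := ((hfin v).mem_toFinset.mp hy).1
    rcases lt_or_gt_of_ne (hsne y) with hd | hd
    · -- descent case : ℓ(ys) < ℓ(y)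
      have hnd : ¬ cs.length y < cs.length (y * s) := not_lt.mpr hd.le
      have hysFC : FullyCommutative cs (y * s) := hfcdesc y hyFC hd
      have hysE : y * s ∈ EFC := hsub3 y hy hysFC
      have hts : Ctx.proj (Ctx.Tw y) * Ctx.proj (Ctx.Tw s)
          = q • Ctx.proj (Ctx.Tw (y * s)) + (q - 1) • Ctx.proj (Ctx.Tw y) := by
        rw [← map_mul, hof_gt y hd, map_add, map_smul, map_smul]
      have hcx : ∀ x', c y x' = if x' = y * s then
          q * Polynomial.aeval (R := ℤ) q (Ctx.apol y v) else 0 := by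
        intro x'
        simp only [hcdef]
        simp [hd, hnd, hysFC]
      calc (Polynomial.aeval (R := ℤ) q (Ctx.apol y v)) •
              (Ctx.proj (Ctx.Tw y) * Ctx.proj (Ctx.Tw s)) +
            (((1 : A) - q) * Polynomial.aeval (R := ℤ) q (Ctx.apol y v)) • Ctx.proj (Ctx.Tw y)
          = (q * Polynomial.aeval (R := ℤ) q (Ctx.apol y v)) • Ctx.proj (Ctx.Tw (y * s)) := by
            rw [hts, smul_add, smul_smul, smul_smul, add_assoc, ← add_smul]
            have hz : Polynomial.aeval (R := ℤ) q (Ctx.apol y v) * (q - 1) +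
                ((1 : A) - q) * Polynomial.aeval (R := ℤ) q (Ctx.apol y v) = 0 := by ring
            rw [hz, zero_smul, add_zero,
              mul_comm (Polynomial.aeval (R := ℤ) q (Ctx.apol y v)) q]
        _ = ∑ x' ∈ EFC, c y x' • Ctx.proj (Ctx.Tw x') := by
            rw [show (∑ x' ∈ EFC, c y x' • Ctx.proj (Ctx.Tw x'))
                = ∑ x' ∈ EFC, (if x' = y * s then
                    (q * Polynomial.aeval (R := ℤ) q (Ctx.apol y v)) • Ctx.proj (Ctx.Tw x')
                  else 0) from Finset.sum_congr rfl fun x' _ => by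
                    rw [hcx x', ite_smul, zero_smul],
              Finset.sum_ite_eq' EFC (y * s), if_pos hysE]
    · -- ascent case : ℓ(y) < ℓ(ys)
      have hnd : ¬ cs.length (y * s) < cs.length y := not_lt.mpr hd.le
      have hyE : y ∈ EFC := hsub2 hy
      have hts : Ctx.proj (Ctx.Tw y) * Ctx.proj (Ctx.Tw s) = Ctx.proj (Ctx.Tw (y * s)) := by
        rw [← map_mul, hof_lt y hd]
      by_cases hysFC : FullyCommutative cs (y * s)
      · have hysE : y * s ∈ EFC := hsub3 y hy hysFC
        have hcx : ∀ x', c y x'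
            = (if x' = y * s then Polynomial.aeval (R := ℤ) q (Ctx.apol y v) else 0)
            + (if x' = y then ((1 : A) - q) * Polynomial.aeval (R := ℤ) q (Ctx.apol y v)
                else 0) := by
          intro x'
          simp only [hcdef]
          simp [hd, hnd, hysFC]
        rw [hts,
          show (∑ x' ∈ EFC, c y x' • Ctx.proj (Ctx.Tw x'))
            = ∑ x' ∈ EFC,
                ((if x' = y * s then (Polynomial.aeval (R := ℤ) q (Ctx.apol y v)) •
                    Ctx.proj (Ctx.Tw x') else 0)
                + (if x' = y then (((1 : A) - q) * Polynomial.aeval (R := ℤ) q (Ctx.apol y v)) •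
                    Ctx.proj (Ctx.Tw x') else 0)) from
            Finset.sum_congr rfl fun x' _ => by
              rw [hcx x', add_smul, ite_smul, zero_smul, ite_smul, zero_smul],
          Finset.sum_add_distrib, Finset.sum_ite_eq' EFC (y * s), if_pos hysE,
          Finset.sum_ite_eq' EFC y, if_pos hyE]
      · -- non fully commutative ascent
        have hDexp : Ctx.proj (Ctx.Tw (y * s))
            = ∑ x' ∈ EFC, (Polynomial.aeval (R := ℤ) q (Ctx.D x' (y * s))) •
                Ctx.proj (Ctx.Tw x') := by
          rw [Ctx.D_eq (y * s), finsum_mem_eq_finite_toFinset_sum _ (hfin (y * s))]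
          refine Finset.sum_subset (hsub4 y hy) ?_
          intro z hzE hzn
          rw [hD0 (y * s) z (fun hc' => hzn ((hfin (y * s)).mem_toFinset.mpr hc')), zero_smul]
        have hcx : ∀ x', c y x'
            = (Polynomial.aeval (R := ℤ) q (Ctx.D x' (y * s)) *
                Polynomial.aeval (R := ℤ) q (Ctx.apol y v))
            + (if x' = y then ((1 : A) - q) * Polynomial.aeval (R := ℤ) q (Ctx.apol y v)
                else 0) := by
          intro x'
          simp only [hcdef]
          simp [hd, hnd, hysFC]
        rw [hts, hDexp, Finset.smul_sum,
          show (∑ x' ∈ EFC, c y x' • Ctx.proj (Ctx.Tw x'))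
            = ∑ x' ∈ EFC,
                ((Polynomial.aeval (R := ℤ) q (Ctx.apol y v)) •
                    ((Polynomial.aeval (R := ℤ) q (Ctx.D x' (y * s))) • Ctx.proj (Ctx.Tw x'))
                + (if x' = y then (((1 : A) - q) * Polynomial.aeval (R := ℤ) q (Ctx.apol y v)) •
                    Ctx.proj (Ctx.Tw x') else 0)) from
            Finset.sum_congr rfl fun x' _ => by
              rw [hcx x', add_smul, ite_smul, zero_smul, smul_smul,
                mul_comm (Polynomial.aeval (R := ℤ) q (Ctx.apol y v))],
          Finset.sum_add_distrib, Finset.sum_ite_eq' EFC y, if_pos hyE]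
  -- assemble
  have hleft : (∑ x' ∈ (hfin w).toFinset,
        (Polynomial.aeval (R := ℤ) q (Ctx.apol x' w)) • Ctx.proj (Ctx.Tw x'))
      = ∑ x' ∈ EFC, (Polynomial.aeval (R := ℤ) q (Ctx.apol x' w)) • Ctx.proj (Ctx.Tw x') := by
    refine Finset.sum_subset hsub1 ?_
    intro z hzE hzn
    rw [hF0 z (fun hc' => hzn ((hfin w).mem_toFinset.mpr hc')), zero_smul]
  have hfinal : (∑ x' ∈ EFC, (Polynomial.aeval (R := ℤ) q (Ctx.apol x' w)) •
        Ctx.proj (Ctx.Tw x'))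
      = ∑ x' ∈ EFC, (∑ y ∈ (hfin v).toFinset, c y x') • Ctx.proj (Ctx.Tw x') := by
    rw [← hleft, e5, Finset.sum_congr rfl hkey, Finset.sum_comm]
    refine Finset.sum_congr rfl fun x' _ => ?_
    rw [Finset.sum_smul]
  -- linear independence
  have hcoeff : ∀ x' ∈ EFC, Polynomial.aeval (R := ℤ) q (Ctx.apol x' w)
      = ∑ y ∈ (hfin v).toFinset, c y x' := by
    have hzero : ∑ x' ∈ EFC, (Polynomial.aeval (R := ℤ) q (Ctx.apol x' w)
        - ∑ y ∈ (hfin v).toFinset, c y x') • Ctx.proj (Ctx.Tw x') = 0 := by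
      simp only [sub_smul, Finset.sum_sub_distrib, hfinal, sub_self]
    have hli := linearIndependent_iff'.mp Ctx.t_indep
    have hst := Finset.sum_subtype_eq_sum_filter
      (fun z : W => (Polynomial.aeval (R := ℤ) q (Ctx.apol z w)
        - ∑ y ∈ (hfin v).toFinset, c y z) • Ctx.proj (Ctx.Tw z))
      (s := EFC) (p := FullyCommutative cs)
    have hzero' : ∑ j ∈ EFC.subtype (FullyCommutative cs),
        (Polynomial.aeval (R := ℤ) q (Ctx.apol (j : W) w)
            - ∑ y ∈ (hfin v).toFinset, c y (j : W)) •
          Ctx.proj (Ctx.Tw (j : W)) = 0 := by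
      rw [hst, Finset.filter_true_of_mem (fun z hz => hmemEFC z hz)]
      exact hzero
    intro x' hx'
    have hx'FC : FullyCommutative cs x' := hmemEFC x' hx'
    have hres := hli (EFC.subtype (FullyCommutative cs))
      (fun j => Polynomial.aeval (R := ℤ) q (Ctx.apol j.1 w)
        - ∑ y ∈ (hfin v).toFinset, c y j.1) hzero' ⟨x', hx'FC⟩
      (by rw [Finset.mem_subtype]; exact hx')
    exact sub_eq_zero.mp hres
  have hxE : x ∈ EFC := hsub1 ((hfin w).mem_toFinset.mpr ⟨hx, hxw⟩)
  have hx_eq := hcoeff x hxE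
  simp only [hcdef, Finset.sum_add_distrib] at hx_eq
  -- pointwise identification of the delta sums
  have hS1 : ∑ y ∈ (hfin v).toFinset,
      (if cs.length (y * s) < cs.length y ∧ x = y * s then
        q * Polynomial.aeval (R := ℤ) q (Ctx.apol y v) else 0)
      = if x * s ∈ (hfin v).toFinset then
          (if cs.length x < cs.length (x * s) then
            q * Polynomial.aeval (R := ℤ) q (Ctx.apol (x * s) v) else 0) else 0 := by
    rw [← Finset.sum_ite_eq' ((hfin v).toFinset) (x * s)
      (fun _ => if cs.length x < cs.length (x * s) then
        q * Polynomial.aeval (R := ℤ) q (Ctx.apol (x * s) v) else 0)]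
    refine Finset.sum_congr rfl fun y _ => ?_
    by_cases hyx : y = x * s
    · subst hyx
      rw [hxss x]
      by_cases hlt : cs.length x < cs.length (x * s)
      · rw [if_pos ⟨hlt, rfl⟩, if_pos rfl, if_pos hlt]
      · rw [if_neg (fun hcc => hlt hcc.1), if_pos rfl, if_neg hlt]
    · rw [if_neg ?_, if_neg hyx]
      rintro ⟨-, h2⟩
      exact hyx (by rw [h2, hxss y])
  have hS2 : ∑ y ∈ (hfin v).toFinset,
      (if cs.length y < cs.length (y * s) ∧ FullyCommutative cs (y * s) ∧ x = y * s then
        Polynomial.aeval (R := ℤ) q (Ctx.apol y v) else 0)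
      = if x * s ∈ (hfin v).toFinset then
          (if cs.length (x * s) < cs.length x then
            Polynomial.aeval (R := ℤ) q (Ctx.apol (x * s) v) else 0) else 0 := by
    rw [← Finset.sum_ite_eq' ((hfin v).toFinset) (x * s)
      (fun _ => if cs.length (x * s) < cs.length x then
        Polynomial.aeval (R := ℤ) q (Ctx.apol (x * s) v) else 0)]
    refine Finset.sum_congr rfl fun y _ => ?_
    by_cases hyx : y = x * s
    · subst hyx
      rw [hxss x]
      by_cases hlt : cs.length (x * s) < cs.length x
      · rw [if_pos ⟨hlt, hx, rfl⟩, if_pos rfl, if_pos hlt]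
      · rw [if_neg (fun hcc => hlt hcc.1), if_pos rfl, if_neg hlt]
    · rw [if_neg ?_, if_neg hyx]
      rintro ⟨-, -, h2⟩
      exact hyx (by rw [h2, hxss y])
  have hS4 : ∑ y ∈ (hfin v).toFinset,
      (if cs.length y < cs.length (y * s) ∧ x = y then
        ((1 : A) - q) * Polynomial.aeval (R := ℤ) q (Ctx.apol y v) else 0)
      = if x ∈ (hfin v).toFinset then
          (if cs.length x < cs.length (x * s) then
            ((1 : A) - q) * Polynomial.aeval (R := ℤ) q (Ctx.apol x v) else 0) else 0 := by
    rw [← Finset.sum_ite_eq' ((hfin v).toFinset) x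
      (fun _ => if cs.length x < cs.length (x * s) then
        ((1 : A) - q) * Polynomial.aeval (R := ℤ) q (Ctx.apol x v) else 0)]
    refine Finset.sum_congr rfl fun y _ => ?_
    by_cases hyx : y = x
    · subst hyx
      by_cases hlt : cs.length y < cs.length (y * s)
      · rw [if_pos ⟨hlt, rfl⟩, if_pos rfl, if_pos hlt]
      · rw [if_neg (fun hcc => hlt hcc.1), if_pos rfl, if_neg hlt]
    · rw [if_neg ?_, if_neg hyx]
      rintro ⟨-, h2⟩
      exact hyx h2.symm
  rw [hS1, hS2, hS4] at hx_eq
  -- identify the D-sum with the finsum in the statement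
  have hS3 : Polynomial.aeval (R := ℤ) q
      (∑ᶠ y ∈ {y : W | FullyCommutative cs y ∧ ¬ FullyCommutative cs (y * s) ∧
          cs.length y < cs.length (y * s)}, Ctx.D x (y * s) * Ctx.apol y v)
      = ∑ y ∈ (hfin v).toFinset,
          (if ¬ FullyCommutative cs (y * s) ∧ cs.length y < cs.length (y * s) then
            Polynomial.aeval (R := ℤ) q (Ctx.D x (y * s)) *
              Polynomial.aeval (R := ℤ) q (Ctx.apol y v) else 0) := by
    have hset : {y : W | FullyCommutative cs y ∧ ¬ FullyCommutative cs (y * s) ∧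
          cs.length y < cs.length (y * s)} ∩
          Function.support (fun y => Ctx.D x (y * s) * Ctx.apol y v)
        = ((((hfin v).toFinset.filter (fun y => ¬ FullyCommutative cs (y * s) ∧
            cs.length y < cs.length (y * s))) : Finset W) : Set W) ∩
          Function.support (fun y => Ctx.D x (y * s) * Ctx.apol y v) := by
      ext z
      simp only [Set.mem_inter_iff, Set.mem_setOf_eq, Function.mem_support, Finset.coe_filter,
        Set.Finite.mem_toFinset]
      constructor
      · rintro ⟨⟨h1, h2, h3⟩, hsupp⟩
        have hapol : Ctx.apol z v ≠ 0 := fun hzz => hsupp (by rw [hzz, mul_zero])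
        have hzv : FullyCommutative cs z ∧ bruhatLE cs z v := by
          by_contra hcc
          exact hapol (Ctx.apol_eq_zero z v (by tauto))
        exact ⟨⟨⟨h1, hzv.2⟩, h2, h3⟩, hsupp⟩
      · rintro ⟨⟨⟨h1, -⟩, h2, h3⟩, hsupp⟩
        exact ⟨⟨h1, h2, h3⟩, hsupp⟩
    rw [finsum_mem_eq_sum_of_inter_support_eq _ hset, map_sum, Finset.sum_filter]
    refine Finset.sum_congr rfl fun y _ => ?_
    by_cases hcond : ¬ FullyCommutative cs (y * s) ∧ cs.length y < cs.length (y * s)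
    · rw [if_pos hcond, if_pos hcond, map_mul]
    · rw [if_neg hcond, if_neg hcond]
  -- zero-extension helpers
  have hAvxs_zero_of : x * s ∉ (hfin v).toFinset →
      Polynomial.aeval (R := ℤ) q (Ctx.apol (x * s) v) = 0 := by
    intro hns
    exact hAv0 (x * s) (fun hcc => hns ((hfin v).mem_toFinset.mpr hcc))
  have hAvx_zero_of : x ∉ (hfin v).toFinset →
      Polynomial.aeval (R := ℤ) q (Ctx.apol x v) = 0 := by
    intro hns
    exact hAv0 x (fun hcc => hns ((hfin v).mem_toFinset.mpr hcc))
  refine ⟨?_, ?_, ?_⟩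
  · -- case 1 : descent at x
    intro h1
    have hnd : ¬ cs.length x < cs.length (x * s) := not_lt.mpr h1.le
    apply aevalq_injective
    simp only [map_add]
    rw [hS3]
    have hS2v : (if x * s ∈ (hfin v).toFinset then
          (if cs.length (x * s) < cs.length x then
            Polynomial.aeval (R := ℤ) q (Ctx.apol (x * s) v) else 0) else 0)
        = Polynomial.aeval (R := ℤ) q (Ctx.apol (x * s) v) := by
      by_cases hmem : x * s ∈ (hfin v).toFinset
      · rw [if_pos hmem, if_pos h1]
      · rw [if_neg hmem, hAvxs_zero_of hmem]
    rw [hS2v] at hx_eq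
    simp only [hnd, if_false, ite_self] at hx_eq
    rw [hx_eq]
    ring
  · -- case 2 : ascent, x*s fully commutative
    intro h1 _h2
    have hnd : ¬ cs.length (x * s) < cs.length x := not_lt.mpr h1.le
    apply aevalq_injective
    simp only [map_add, map_mul, map_sub, map_one, Polynomial.aeval_X]
    rw [hS3]
    have hS1v : (if x * s ∈ (hfin v).toFinset then
          (if cs.length x < cs.length (x * s) then
            q * Polynomial.aeval (R := ℤ) q (Ctx.apol (x * s) v) else 0) else 0)
        = q * Polynomial.aeval (R := ℤ) q (Ctx.apol (x * s) v) := by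
      by_cases hmem : x * s ∈ (hfin v).toFinset
      · rw [if_pos hmem, if_pos h1]
      · rw [if_neg hmem, hAvxs_zero_of hmem, mul_zero]
    have hS4v : (if x ∈ (hfin v).toFinset then
          (if cs.length x < cs.length (x * s) then
            ((1 : A) - q) * Polynomial.aeval (R := ℤ) q (Ctx.apol x v) else 0) else 0)
        = ((1 : A) - q) * Polynomial.aeval (R := ℤ) q (Ctx.apol x v) := by
      by_cases hmem : x ∈ (hfin v).toFinset
      · rw [if_pos hmem, if_pos h1]
      · rw [if_neg hmem, hAvx_zero_of hmem, mul_zero]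
    rw [hS1v, hS4v] at hx_eq
    simp only [hnd, if_false, ite_self] at hx_eq
    rw [hx_eq]
    ring
  · -- case 3 : ascent, x*s not fully commutative
    intro h1 h2
    have hnd : ¬ cs.length (x * s) < cs.length x := not_lt.mpr h1.le
    have hxsnotmem : x * s ∉ (hfin v).toFinset := fun hm =>
      h2 ((hfin v).mem_toFinset.mp hm).1
    apply aevalq_injective
    simp only [map_add, map_mul, map_sub, map_one, Polynomial.aeval_X]
    rw [hS3]
    have hS4v : (if x ∈ (hfin v).toFinset then
          (if cs.length x < cs.length (x * s) then
            ((1 : A) - q) * Polynomial.aeval (R := ℤ) q (Ctx.apol x v) else 0) else 0)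
        = ((1 : A) - q) * Polynomial.aeval (R := ℤ) q (Ctx.apol x v) := by
      by_cases hmem : x ∈ (hfin v).toFinset
      · rw [if_pos hmem, if_pos h1]
      · rw [if_neg hmem, hAvx_zero_of hmem, mul_zero]
    rw [if_neg hxsnotmem, hS4v] at hx_eq
    simp only [hnd, if_false, ite_self] at hx_eq
    rw [hx_eq]
    ring

end TLPaper
end
end

section
/- Let X be a Coxeter graph satisfying condition (★) and let w ∈ W_c(X). Then Σ_{x ∈ W_c(X), x ≤ w} (−1)^{ℓ(x)} (−1)^{ℓ(w)} a_{x,w}(q) = q^{ℓ(w)}. -/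
/-!
Common setup: Coxeter systems, Bruhat order, fully commutative elements,
the Hecke algebra `H(X)`, the generalized Temperley--Lieb algebra `TL(X)`,
and the polynomial families `R`, `P` (Kazhdan--Lusztig), `D`, `a`, `L`.
-/

open LaurentPolynomial Polynomial

noncomputable section

namespace TLPaper

variable {B : Type*} {W : Type*} [Group W] {M : CoxeterMatrix B} (cs : CoxeterSystem M W)

section SignCharacter

variable {B : Type*} {W : Type*} [Group W] {M : CoxeterMatrix B} {cs : CoxeterSystem M W}
  {H : Type*} [Ring H] [Algebra A H] {TL : Type*} [Ring TL] [Algebra A TL]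
  (Ctx : TLContext cs H TL)

private lemma A_half {a : A} (h : a = -a) : a = 0 := by
  apply LaurentPolynomial.ext
  intro n
  have h2 : a.coeff n = -(a.coeff n) := by
    conv_lhs => rw [h]
    exact Finsupp.neg_apply a.coeff n
  have h0 : (0 : A).coeff n = 0 := rfl
  omega

private lemma aeval_q_injective :
    Function.Injective (fun p : Polynomial ℤ => Polynomial.aeval q p) := by
  have hcomp : ∀ p : Polynomial ℤ, Polynomial.aeval q p
      = Polynomial.toLaurent (p.comp (Polynomial.X ^ 2)) := by
    intro p
    have he : (Polynomial.aeval q : Polynomial ℤ →ₐ[ℤ] A) =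
        (Polynomial.toLaurentAlg).comp (Polynomial.aeval (Polynomial.X ^ 2 : Polynomial ℤ)) := by
      apply Polynomial.algHom_ext
      simp only [Polynomial.aeval_X, AlgHom.comp_apply]
      rw [q]
      simp [Polynomial.toLaurentAlg_apply, T_pow]
    rw [he]
    simp [Polynomial.toLaurentAlg_apply, Polynomial.comp_eq_aeval]
  intro p1 p2 hpq
  simp only [hcomp] at hpq
  have h2 := Polynomial.toLaurent_injective hpq
  have h3 : (p1 - p2).comp (Polynomial.X ^ 2) = 0 := by
    rw [Polynomial.sub_comp, h2, sub_self]
  rw [Polynomial.comp_eq_zero_iff] at h3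
  rcases h3 with h | ⟨-, hx⟩
  · exact sub_eq_zero.mp h
  · exfalso
    simp only [Polynomial.coeff_X_pow] at hx
    norm_num at hx

/-- The basis of `H` given by the `T_w`. -/
private def Bas : Module.Basis W A H := Module.Basis.mk Ctx.Tw_indep Ctx.Tw_span.ge

private lemma Bas_apply (w : W) : Bas Ctx w = Ctx.Tw w := Module.Basis.mk_apply _ _ w

/-- The sign character, as a linear map. -/
private def sgn : H →ₗ[A] A := (Bas Ctx).constr A fun w => (-1 : A) ^ cs.length w

private lemma sgn_Tw (w : W) : sgn Ctx (Ctx.Tw w) = (-1 : A) ^ cs.length w := by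
  rw [← Bas_apply]
  exact (Bas Ctx).constr_basis A _ w

private lemma sgn_one : sgn Ctx (1 : H) = 1 := by
  rw [← Ctx.Tw_one, sgn_Tw, cs.length_one, pow_zero]

private lemma sgn_mul_simple (i : B) (h : H) :
    sgn Ctx (h * Ctx.Tw (cs.simple i)) = - sgn Ctx h := by
  have key : (sgn Ctx).comp (LinearMap.mulRight A (Ctx.Tw (cs.simple i))) = - sgn Ctx := by
    apply (Bas Ctx).ext
    intro x
    rw [Bas_apply]
    simp only [LinearMap.comp_apply, LinearMap.mulRight_apply, LinearMap.neg_apply]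
    rcases cs.length_mul_simple x i with hl | hl
    · rw [Ctx.Tw_mul_simple_of_lt x i (by omega), sgn_Tw, sgn_Tw, hl, pow_succ]
      ring
    · rw [Ctx.Tw_mul_simple_of_gt x i (by omega), map_add, map_smul, map_smul, sgn_Tw, sgn_Tw]
      have hx : cs.length x = cs.length (x * cs.simple i) + 1 := by omega
      rw [hx, pow_succ]
      simp only [smul_eq_mul]
      ring
  have := DFunLike.congr_fun key h
  simpa using this

private lemma sgn_mul_Tw : ∀ (n : ℕ) (w : W), cs.length w = n → ∀ h : H,
    sgn Ctx (h * Ctx.Tw w) = (-1 : A) ^ cs.length w * sgn Ctx h := by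
  intro n
  induction n using Nat.strong_induction_on with
  | _ n ih =>
    intro w hn h
    rcases eq_or_ne w 1 with rfl | hne
    · rw [Ctx.Tw_one, mul_one, cs.length_one, pow_zero, one_mul]
    · obtain ⟨i, hi⟩ := cs.exists_rightDescent_of_ne_one hne
      rw [cs.isRightDescent_iff] at hi
      set w' := w * cs.simple i with hw'
      have hww : w' * cs.simple i = w := by
        rw [hw', mul_assoc, cs.simple_mul_simple_self, mul_one]
      have hlt : cs.length w' < cs.length (w' * cs.simple i) := by rw [hww]; omega
      have hTw : Ctx.Tw w' * Ctx.Tw (cs.simple i) = Ctx.Tw w := by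
        rw [Ctx.Tw_mul_simple_of_lt w' i hlt, hww]
      have hlen : cs.length w = cs.length w' + 1 := by omega
      rw [← hTw, ← mul_assoc, sgn_mul_simple,
        ih (cs.length w') (by omega) w' rfl h, hlen, pow_succ]
      ring

private lemma sgn_mul (x y : H) : sgn Ctx (x * y) = sgn Ctx x * sgn Ctx y := by
  have key : (sgn Ctx).comp (LinearMap.mulLeft A x) = sgn Ctx x • sgn Ctx := by
    apply (Bas Ctx).ext
    intro u
    rw [Bas_apply]
    simp only [LinearMap.comp_apply, LinearMap.mulLeft_apply, LinearMap.smul_apply,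
      smul_eq_mul]
    rw [sgn_mul_Tw Ctx (cs.length u) u rfl x, sgn_Tw]
    ring
  have := DFunLike.congr_fun key y
  simpa using this

private lemma sgn_Tinv (w : W) : sgn Ctx (Ctx.Tinv w) = (-1 : A) ^ cs.length w := by
  have h1 : sgn Ctx (Ctx.Tinv w * Ctx.Tw w) = 1 := by
    rw [Ctx.Tinv_mul_Tw]; exact sgn_one Ctx
  rw [sgn_mul, sgn_Tw] at h1
  have h2 : ((-1 : A) ^ cs.length w) * ((-1 : A) ^ cs.length w) = 1 := by
    rw [← mul_pow]; norm_num
  calc sgn Ctx (Ctx.Tinv w)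
      = sgn Ctx (Ctx.Tinv w) * (((-1 : A) ^ cs.length w) * ((-1 : A) ^ cs.length w)) := by
        rw [h2, mul_one]
    _ = (sgn Ctx (Ctx.Tinv w) * (-1 : A) ^ cs.length w) * (-1 : A) ^ cs.length w := by ring
    _ = 1 * (-1 : A) ^ cs.length w := by rw [h1]
    _ = (-1 : A) ^ cs.length w := one_mul _

private lemma sgn_dihedral (i j : B) :
    sgn Ctx (∑ᶠ u ∈ (Subgroup.closure {cs.simple i, cs.simple j} : Set W), Ctx.Tw u) = 0 := by
  set C : Set W := (Subgroup.closure {cs.simple i, cs.simple j} : Set W) with hCdef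
  by_cases hfin : C.Finite
  · rw [finsum_mem_eq_finite_toFinset_sum _ hfin, map_sum]
    have hs : cs.simple i ∈ Subgroup.closure {cs.simple i, cs.simple j} :=
      Subgroup.subset_closure (Set.mem_insert _ _)
    have key : ∑ u ∈ hfin.toFinset, sgn Ctx (Ctx.Tw u)
        = ∑ u ∈ hfin.toFinset, (-(sgn Ctx (Ctx.Tw u))) := by
      apply Finset.sum_bij' (fun u _ => cs.simple i * u) (fun u _ => cs.simple i * u)
      · intro a ha
        rw [Set.Finite.mem_toFinset] at ha ⊢
        exact Subgroup.mul_mem _ hs ha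
      · intro a ha
        rw [Set.Finite.mem_toFinset] at ha ⊢
        exact Subgroup.mul_mem _ hs ha
      · intro a _
        rw [← mul_assoc, cs.simple_mul_simple_self, one_mul]
      · intro a _
        rw [← mul_assoc, cs.simple_mul_simple_self, one_mul]
      · intro a _
        rw [sgn_Tw, sgn_Tw]
        rcases cs.length_simple_mul a i with hl | hl
        · rw [hl, pow_succ]; ring
        · have : cs.length a = cs.length (cs.simple i * a) + 1 := by omega
          rw [this, pow_succ]; ring
    rw [Finset.sum_neg_distrib] at key
    exact A_half key
  · rw [finsum_mem_eq_zero_of_infinite, map_zero]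
    have hsub : C ⊆ Function.support Ctx.Tw := fun u _ => Ctx.Tw_indep.ne_zero u
    rw [Set.inter_eq_self_of_subset_left hsub]
    exact hfin

private lemma sgn_proj (h : H) (hp : Ctx.proj h = 0) : sgn Ctx h = 0 := by
  have hmem := (Ctx.proj_ker h).mp hp
  have hle : Submodule.span A
      {x : H | ∃ (i j : B) (a b : H), M i j ≠ 0 ∧ M i j ≠ 1 ∧ M i j ≠ 2 ∧
        x = a * (∑ᶠ u ∈ (Subgroup.closure {cs.simple i, cs.simple j} : Set W), Ctx.Tw u) * b}
      ≤ LinearMap.ker (sgn Ctx) := by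
    rw [Submodule.span_le]
    rintro x ⟨i, j, a, b, -, -, -, rfl⟩
    rw [SetLike.mem_coe, LinearMap.mem_ker, sgn_mul, sgn_mul, sgn_dihedral]
    ring
  exact LinearMap.mem_ker.mp (hle hmem)

end SignCharacter

/-- Proposition (paper, Prop. `apollo`): if `X` satisfies (★) and `w ∈ W_c`, then
`Σ_{x ∈ W_c, x ≤ w} ε_x ε_w a_{x,w}(q) = q^{ℓ(w)}`. -/
theorem statement9 {B : Type*} {W : Type*} [Group W] {M : CoxeterMatrix B} {cs : CoxeterSystem M W}
    {H : Type*} [Ring H] [Algebra A H] {TL : Type*} [Ring TL] [Algebra A TL]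
    (Ctx : TLContext cs H TL)
    (hstar : Ctx.Star) (w : W) (hw : FullyCommutative cs w) :
    ∑ᶠ x ∈ {x | FullyCommutative cs x ∧ bruhatLE cs x w},
      ((-1 : Polynomial ℤ) ^ cs.length x * (-1 : Polynomial ℤ) ^ cs.length w *
        Ctx.apol x w) =
      Polynomial.X ^ cs.length w := by
  classical
  have hfin : {x | FullyCommutative cs x ∧ bruhatLE cs x w}.Finite :=
    (Ctx.finite_bruhatLE w).subset (fun x hx => hx.2)
  -- Step 1: the defect of `apol_eq` lies in the kernel of `proj`.
  have hproj : Ctx.proj (Ctx.Tinv w⁻¹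
      - (LaurentPolynomial.T (-2 * (cs.length w : ℤ)) : A) •
        ∑ u ∈ hfin.toFinset, (Polynomial.aeval q (Ctx.apol u w)) • Ctx.Tw u) = 0 := by
    rw [map_sub, map_smul, map_sum]
    simp only [map_smul]
    rw [Ctx.apol_eq w hw, finsum_mem_eq_finite_toFinset_sum _ hfin]
    exact sub_self _
  -- Step 2: apply the sign character.
  have hzero := sgn_proj Ctx _ hproj
  rw [map_sub, map_smul, map_sum] at hzero
  simp only [map_smul, sgn_Tw, smul_eq_mul] at hzero
  rw [sgn_Tinv, cs.length_inv] at hzero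
  have hA : ((-1 : A) ^ cs.length w) = (LaurentPolynomial.T (-2 * (cs.length w : ℤ)) : A) *
      ∑ u ∈ hfin.toFinset, (Polynomial.aeval q (Ctx.apol u w)) * (-1 : A) ^ cs.length u :=
    sub_eq_zero.mp hzero
  have h2 : ((-1 : A) ^ cs.length w) * ((-1 : A) ^ cs.length w) = 1 := by
    rw [← mul_pow]; norm_num
  have hT : (LaurentPolynomial.T (2 * (cs.length w : ℤ)) : A) *
      LaurentPolynomial.T (-2 * (cs.length w : ℤ)) = 1 := by
    rw [← T_add, show (2 * (cs.length w : ℤ) + -2 * (cs.length w : ℤ)) = 0 by ring, T_zero]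
  have hS : ∑ u ∈ hfin.toFinset, (Polynomial.aeval q (Ctx.apol u w)) * (-1 : A) ^ cs.length u
      = (LaurentPolynomial.T (2 * (cs.length w : ℤ)) : A) * (-1 : A) ^ cs.length w := by
    calc ∑ u ∈ hfin.toFinset, (Polynomial.aeval q (Ctx.apol u w)) * (-1 : A) ^ cs.length u
        = ((LaurentPolynomial.T (2 * (cs.length w : ℤ)) : A) *
            LaurentPolynomial.T (-2 * (cs.length w : ℤ))) *
          ∑ u ∈ hfin.toFinset, (Polynomial.aeval q (Ctx.apol u w)) * (-1 : A) ^ cs.length u := by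
          rw [hT, one_mul]
      _ = (LaurentPolynomial.T (2 * (cs.length w : ℤ)) : A) *
          ((LaurentPolynomial.T (-2 * (cs.length w : ℤ)) : A) *
            ∑ u ∈ hfin.toFinset, (Polynomial.aeval q (Ctx.apol u w)) * (-1 : A) ^ cs.length u) := by
          rw [mul_assoc]
      _ = (LaurentPolynomial.T (2 * (cs.length w : ℤ)) : A) * (-1 : A) ^ cs.length w := by
          rw [← hA]
  -- Step 3: lift the identity from `A` back to `ℤ[X]`.
  apply aeval_q_injective
  show Polynomial.aeval q (∑ᶠ x ∈ {x | FullyCommutative cs x ∧ bruhatLE cs x w},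
      ((-1 : Polynomial ℤ) ^ cs.length x * (-1 : Polynomial ℤ) ^ cs.length w * Ctx.apol x w))
    = Polynomial.aeval q ((Polynomial.X : Polynomial ℤ) ^ cs.length w)
  rw [finsum_mem_eq_finite_toFinset_sum _ hfin]
  simp only [map_sum, map_mul, map_pow, map_neg, map_one, Polynomial.aeval_X]
  have hq : (q : A) ^ cs.length w = LaurentPolynomial.T (2 * (cs.length w : ℤ)) := by
    rw [q, T_pow, show ((cs.length w : ℕ) : ℤ) * 2 = 2 * (cs.length w : ℤ) by ring]
  have hrearr : ∑ u ∈ hfin.toFinset,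
        (-1 : A) ^ cs.length u * (-1 : A) ^ cs.length w * Polynomial.aeval q (Ctx.apol u w)
      = (-1 : A) ^ cs.length w *
        ∑ u ∈ hfin.toFinset, (Polynomial.aeval q (Ctx.apol u w)) * (-1 : A) ^ cs.length u := by
    rw [Finset.mul_sum]
    exact Finset.sum_congr rfl fun u _ => by ring
  rw [hq, hrearr, hS,
    show ((-1 : A) ^ cs.length w * ((LaurentPolynomial.T (2 * (cs.length w : ℤ)) : A) *
        (-1 : A) ^ cs.length w))
      = (LaurentPolynomial.T (2 * (cs.length w : ℤ)) : A) *
        ((-1 : A) ^ cs.length w * (-1 : A) ^ cs.length w) from by ring,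
    h2, mul_one]

end TLPaper
end
end
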